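/- arXiv:2503.00712 — 8 statements merged into one kernel-verified Lean document; each statement's English description precedes it below -/
import Mathlib

section
/- Let G = (V,E) be a finite simple graph, let t ≥ 1 and f ≥ 0 be integers, and let H be a spanning subgraph of G. Suppose that for every edge uv ∈ E ∖ E(H) and every set F ⊆ V ∖ {u,v} with |F| ≤ f one has d_{H∖F}(u,v) ≤ t. Then H is an f-VFT t-spanner of G. (This is the correctness of the greedy algorithm for vertex-fault-tolerant spanners: the greedy output satisfies the hypothesis, hence is a valid f-VFT t-spanner.) -/
open SimpleGraph
open scoped ENNReal

/-- The graph obtained from `G` by deleting the vertices in `F` (the remaining graph is the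
induced subgraph on `V ∖ F`, with the deleted vertices kept as isolated vertices so that the
vertex type is unchanged; distances between surviving vertices agree with the induced subgraph). -/
def SimpleGraph.delVerts {V : Type*} (G : SimpleGraph V) (F : Set V) : SimpleGraph V where
  Adj a b := G.Adj a b ∧ a ∉ F ∧ b ∉ F
  symm := by
    constructor
    intro a b h
    exact ⟨h.1.symm, h.2.2, h.2.1⟩
  loopless := by
    constructor
    intro a h
    exact G.irrefl h.1

/-- `H` is an `f`-vertex-fault-tolerant (`f`-VFT) `t`-spanner of `G`: `H` is a subgraph of `G`
and for every fault set `F ⊆ V` with `|F| ≤ f` and all `u, v ∉ F`,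
`d_{H∖F}(u,v) ≤ t · d_{G∖F}(u,v)` (distances in `ℕ∞`, with `∞` if there is no path). -/
def IsVFTSpanner {V : Type*} (G H : SimpleGraph V) (f t : ℕ) : Prop :=
  H ≤ G ∧ ∀ F : Set V, F.ncard ≤ f → ∀ u v : V, u ∉ F → v ∉ F →
    (H.delVerts F).edist u v ≤ (t : ℕ∞) * (G.delVerts F).edist u v

/-- Correctness of the greedy algorithm for vertex-fault-tolerant spanners: if `H` is a spanning
subgraph of `G` such that for every non-spanner edge `uv ∈ E(G) ∖ E(H)` and every fault set
`F ⊆ V ∖ {u,v}` of size at most `f` one has `d_{H∖F}(u,v) ≤ t`, then `H` is an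
`f`-VFT `t`-spanner of `G`. -/
theorem stmt0 {V : Type*} [Fintype V] (G H : SimpleGraph V) (t f : ℕ) (ht : 1 ≤ t)
    (hHG : H ≤ G)
    (hgreedy : ∀ u v : V, G.Adj u v → ¬ H.Adj u v →
      ∀ F : Set V, u ∉ F → v ∉ F → F.ncard ≤ f →
        (H.delVerts F).edist u v ≤ (t : ℕ∞)) :
    IsVFTSpanner G H f t := by
  refine ⟨hHG, fun F hF u v hu hv => ?_⟩
  -- edge case lemma
  have hedge : ∀ a b : V, (G.delVerts F).Adj a b → (H.delVerts F).edist a b ≤ (t : ℕ∞) := by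
    intro a b hab
    obtain ⟨hGab, haF, hbF⟩ := hab
    by_cases hH : H.Adj a b
    · calc (H.delVerts F).edist a b ≤ ((Walk.nil.cons (show (H.delVerts F).Adj a b from
          ⟨hH, haF, hbF⟩)).length : ℕ∞) := SimpleGraph.edist_le _
        _ = 1 := by simp
        _ ≤ (t : ℕ∞) := by exact_mod_cast ht
    · exact hgreedy a b hGab hH F haF hbF hF
  -- walk induction
  have key : ∀ (a b : V) (p : (G.delVerts F).Walk a b),
      (H.delVerts F).edist a b ≤ (t : ℕ∞) * p.length := by
    intro a b p
    induction p with
    | nil => simp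
    | cons h p ih =>
      rename_i x y z
      calc (H.delVerts F).edist x z ≤ (H.delVerts F).edist x y + (H.delVerts F).edist y z :=
            SimpleGraph.edist_triangle
        _ ≤ (t : ℕ∞) + (t : ℕ∞) * p.length := add_le_add (hedge x y h) ih
        _ = (t : ℕ∞) * ((Walk.cons h p).length : ℕ∞) := by
            push_cast [Walk.length_cons]
            ring
  cases eq_or_ne ((G.delVerts F).edist u v) ⊤ with
  | inl h =>
    rw [h, ENat.mul_top (by simp; omega : (t : ℕ∞) ≠ 0)]
    exact le_top
  | inr h =>
    obtain ⟨p, hp⟩ := SimpleGraph.exists_walk_of_edist_ne_top h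
    rw [← hp]
    exact key u v p
end

section
/- Let G = (V,E) be a finite simple graph, let t ≥ 1 and f ≥ 0 be integers, and let H be a spanning subgraph of G. Suppose that for every edge uv ∈ E ∖ E(H) and every set F ⊆ E(H) with |F| ≤ f one has d_{H∖F}(u,v) ≤ t. Then H is an f-EFT t-spanner of G. (This is the correctness of the greedy algorithm for edge-fault-tolerant spanners: the greedy output satisfies the hypothesis, hence is a valid f-EFT t-spanner.) -/
open SimpleGraph
open scoped ENNReal

/-- `H` is an `f`-edge-fault-tolerant (`f`-EFT) `t`-spanner of `G`: `H` is a subgraph of `G`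
and for every fault set `F ⊆ E(G)` with `|F| ≤ f` and all `u, v ∈ V`,
`d_{H∖F}(u,v) ≤ t · d_{G∖F}(u,v)` (distances in `ℕ∞`, with `∞` if there is no path). -/
def IsEFTSpanner {V : Type*} (G H : SimpleGraph V) (f t : ℕ) : Prop :=
  H ≤ G ∧ ∀ F : Set (Sym2 V), F ⊆ G.edgeSet → F.ncard ≤ f → ∀ u v : V,
    (H.deleteEdges F).edist u v ≤ (t : ℕ∞) * (G.deleteEdges F).edist u v

private lemma aux_walk {V : Type*} {G' H' : SimpleGraph V} (t : ℕ)
    (h : ∀ a b : V, G'.Adj a b → H'.edist a b ≤ (t : ℕ∞)) :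
    ∀ {u v : V} (p : G'.Walk u v), H'.edist u v ≤ (t : ℕ∞) * p.length := by
  intro u v p
  induction p with
  | nil => simp [SimpleGraph.edist_self]
  | cons hadj p ih =>
      calc H'.edist _ _ ≤ H'.edist _ _ + H'.edist _ _ := SimpleGraph.edist_triangle
        _ ≤ (t : ℕ∞) + (t : ℕ∞) * p.length := add_le_add (h _ _ hadj) ih
        _ = (t : ℕ∞) * (p.length + 1) := by ring
        _ = (t : ℕ∞) * (SimpleGraph.Walk.cons hadj p).length := by
              rw [SimpleGraph.Walk.length_cons]; push_cast; ring

/-- Correctness of the greedy algorithm for edge-fault-tolerant spanners: if `H` is a spanning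
subgraph of `G` such that for every non-spanner edge `uv ∈ E(G) ∖ E(H)` and every fault set
`F ⊆ E(H)` of size at most `f` one has `d_{H∖F}(u,v) ≤ t`, then `H` is an
`f`-EFT `t`-spanner of `G`. -/
theorem stmt1 {V : Type*} [Fintype V] (G H : SimpleGraph V) (t f : ℕ) (ht : 1 ≤ t)
    (hHG : H ≤ G)
    (hgreedy : ∀ u v : V, G.Adj u v → ¬ H.Adj u v →
      ∀ F : Set (Sym2 V), F ⊆ H.edgeSet → F.ncard ≤ f →
        (H.deleteEdges F).edist u v ≤ (t : ℕ∞)) :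
    IsEFTSpanner G H f t := by
  refine ⟨hHG, fun F hFG hFf u v => ?_⟩
  set F' : Set (Sym2 V) := F ∩ H.edgeSet with hF'
  have hdel : H.deleteEdges F = H.deleteEdges F' := by
    ext a b
    simp only [SimpleGraph.deleteEdges_adj, hF', Set.mem_inter_iff]
    constructor
    · rintro ⟨h1, h2⟩; exact ⟨h1, fun hc => h2 hc.1⟩
    · rintro ⟨h1, h2⟩; exact ⟨h1, fun hc => h2 ⟨hc, H.mem_edgeSet.mpr h1⟩⟩
  have hF'f : F'.ncard ≤ f :=
    le_trans (Set.ncard_le_ncard Set.inter_subset_left (Set.toFinite F)) hFf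
  have hedge : ∀ a b : V, (G.deleteEdges F).Adj a b →
      (H.deleteEdges F).edist a b ≤ (t : ℕ∞) := by
    intro a b hab
    rw [SimpleGraph.deleteEdges_adj] at hab
    by_cases hH : H.Adj a b
    · have : (H.deleteEdges F).Adj a b := SimpleGraph.deleteEdges_adj.mpr ⟨hH, hab.2⟩
      calc (H.deleteEdges F).edist a b ≤ 1 := SimpleGraph.edist_le this.toWalk
        _ ≤ (t : ℕ∞) := by exact_mod_cast Nat.one_le_cast.mpr ht
    · rw [hdel]
      exact hgreedy a b hab.1 hH F' Set.inter_subset_right hF'f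
  rcases eq_or_ne ((G.deleteEdges F).edist u v) ⊤ with htop | htop
  · rw [htop, ENat.mul_top]
    · exact le_top
    · exact Nat.cast_ne_zero.mpr (by omega)
  · obtain ⟨p, hp⟩ := SimpleGraph.exists_walk_of_edist_ne_top htop
    rw [← hp]
    exact aux_walk t hedge p
end

section
/- Let t ≥ 2 and f ≥ 0 be integers, let H be an f-VFT t-spanner of a finite simple graph G = (V,E), and let uv ∈ E ∖ E(H). Then H contains L = ⌊f/(t−1)⌋ + 1 pairwise internally vertex-disjoint u–v paths, each containing at most t edges. -/
open SimpleGraph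
open scoped ENNReal

lemma delVerts_le {V : Type*} (G : SimpleGraph V) (F : Set V) : G.delVerts F ≤ G :=
  fun _ _ h => h.1

lemma support_not_mem_of_delVerts {V : Type*} {G : SimpleGraph V} {F : Set V} {u v : V}
    (p : (G.delVerts F).Walk u v) (hu : u ∉ F) : ∀ x ∈ p.support, x ∉ F := by
  induction p with
  | nil => intro x hx; simp at hx; subst hx; exact hu
  | cons h p ih =>
    intro x hx
    rw [SimpleGraph.Walk.support_cons, List.mem_cons] at hx
    rcases hx with rfl | hx
    · exact h.2.1
    · exact ih h.2.2 x hx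

/-- Extension step: given `k ≤ f/(t-1)` internally disjoint short paths, find one more. -/
lemma extend_step {V : Type*} [Fintype V] (G H : SimpleGraph V) (t f : ℕ) (ht : 2 ≤ t)
    (hsp : IsVFTSpanner G H f t) (u v : V) (huv : G.Adj u v)
    (k : ℕ) (hk : k ≤ f / (t - 1)) (P : Fin k → H.Walk u v)
    (hpath : ∀ i, (P i).IsPath) (hlen : ∀ i, (P i).length ≤ t) :
    ∃ Q : H.Walk u v, Q.IsPath ∧ Q.length ≤ t ∧
      ∀ i, ∀ x ∈ Q.support, x ∈ (P i).support → x = u ∨ x = v := by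
  classical
  set Fs : Finset V :=
    Finset.univ.biUnion (fun i => (((P i).support.toFinset.erase v).erase u)) with hFs
  have hmemF : ∀ x : V, x ∈ Fs ↔ ∃ i, x ≠ u ∧ x ≠ v ∧ x ∈ (P i).support := by
    intro x
    simp [hFs, Finset.mem_biUnion, Finset.mem_erase, List.mem_toFinset, and_assoc]
  have hune : u ≠ v := huv.ne
  have hcard : (Fs : Set V).ncard ≤ f := by
    rw [Set.ncard_coe_finset]
    calc Fs.card ≤ ∑ _i : Fin k, (t - 1) := by
          refine (Finset.card_biUnion_le).trans (Finset.sum_le_sum ?_)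
          intro i _
          have hnd : (P i).support.Nodup := (hpath i).support_nodup
          have hv' : v ∈ (P i).support.toFinset := List.mem_toFinset.mpr (P i).end_mem_support
          have hu' : u ∈ ((P i).support.toFinset.erase v) :=
            Finset.mem_erase.mpr ⟨hune, List.mem_toFinset.mpr (P i).start_mem_support⟩
          rw [Finset.card_erase_of_mem hu', Finset.card_erase_of_mem hv',
            List.toFinset_card_of_nodup hnd, SimpleGraph.Walk.length_support]
          have h1 : 1 ≤ (P i).length := by
            by_contra h
            push_neg at h
            interval_cases h' : (P i).length
            exact hune ((P i).eq_of_length_eq_zero h')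
          have h2 := hlen i
          omega
      _ = k * (t - 1) := by simp [Finset.sum_const, mul_comm]
      _ ≤ (f / (t - 1)) * (t - 1) := Nat.mul_le_mul_right _ hk
      _ ≤ f := Nat.div_mul_le_self _ _
  have huF : u ∉ (Fs : Set V) := by
    intro h
    obtain ⟨i, h1, _, _⟩ := (hmemF u).mp h
    exact h1 rfl
  have hvF : v ∉ (Fs : Set V) := by
    intro h
    obtain ⟨i, _, h2, _⟩ := (hmemF v).mp h
    exact h2 rfl
  have hGadj : (G.delVerts (Fs : Set V)).Adj u v := ⟨huv, huF, hvF⟩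
  have hGe : (G.delVerts (Fs : Set V)).edist u v = 1 :=
    SimpleGraph.edist_eq_one_iff_adj.mpr hGadj
  have hHe : (H.delVerts (Fs : Set V)).edist u v ≤ (t : ℕ∞) := by
    have := hsp.2 (Fs : Set V) hcard u v huF hvF
    rwa [hGe, mul_one] at this
  have hne : (H.delVerts (Fs : Set V)).edist u v ≠ ⊤ := by
    intro h
    rw [h, top_le_iff] at hHe
    exact (ENat.coe_ne_top t) hHe
  obtain ⟨p, hp⟩ := SimpleGraph.exists_walk_of_edist_ne_top hne
  have hplen : p.length ≤ t := by
    have : (p.length : ℕ∞) ≤ (t : ℕ∞) := hp ▸ hHe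
    exact_mod_cast this
  -- take the bypass path of p
  set q := p.bypass with hq
  have hqpath : q.IsPath := p.bypass_isPath
  have hqlen : q.length ≤ t := le_trans p.length_bypass_le hplen
  have hqsupp : ∀ x ∈ q.support, x ∉ (Fs : Set V) := by
    intro x hx
    exact support_not_mem_of_delVerts q huF x hx
  refine ⟨q.mapLe (delVerts_le H (Fs : Set V)), hqpath.mapLe _, ?_, ?_⟩
  · rw [SimpleGraph.Walk.mapLe]
    rw [SimpleGraph.Walk.length_map]
    exact hqlen
  · intro i x hx hxi
    have hsupp : x ∈ q.support := by
      rw [SimpleGraph.Walk.mapLe, SimpleGraph.Walk.support_map] at hx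
      simpa using hx
    by_contra h
    push_neg at h
    exact hqsupp x hsupp ((hmemF x).mpr ⟨i, h.1, h.2, hxi⟩)

/-- If `H` is an `f`-VFT `t`-spanner of `G` (with `t ≥ 2`) and `uv ∈ E(G) ∖ E(H)`, then `H`
contains `L = ⌊f/(t−1)⌋ + 1` pairwise internally vertex-disjoint `u`–`v` paths, each with at
most `t` edges. -/
theorem stmt2 {V : Type*} [Fintype V] (G H : SimpleGraph V) (t f : ℕ) (ht : 2 ≤ t)
    (hsp : IsVFTSpanner G H f t) (u v : V) (huv : G.Adj u v) (hnotH : ¬ H.Adj u v) :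
    ∃ P : Fin (f / (t - 1) + 1) → H.Walk u v,
      (∀ i, (P i).IsPath) ∧ (∀ i, (P i).length ≤ t) ∧
      (∀ i j, i ≠ j → ∀ x : V, x ∈ (P i).support → x ∈ (P j).support → x = u ∨ x = v) := by
  classical
  suffices h : ∀ k : ℕ, k ≤ f / (t - 1) + 1 →
      ∃ P : Fin k → H.Walk u v,
        (∀ i, (P i).IsPath) ∧ (∀ i, (P i).length ≤ t) ∧
        (∀ i j, i ≠ j → ∀ x : V, x ∈ (P i).support → x ∈ (P j).support → x = u ∨ x = v) by
    exact h _ le_rfl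
  intro k
  induction k with
  | zero => exact fun _ => ⟨Fin.elim0, fun i => i.elim0, fun i => i.elim0, fun i => i.elim0⟩
  | succ k ih =>
    intro hk
    obtain ⟨P, hpath, hlen, hdisj⟩ := ih (Nat.le_of_succ_le hk)
    obtain ⟨Q, hQpath, hQlen, hQdisj⟩ :=
      extend_step G H t f ht hsp u v huv k (Nat.lt_succ_iff.mp hk) P hpath hlen
    refine ⟨Fin.snoc P Q, ?_, ?_, ?_⟩
    · intro i
      refine Fin.lastCases ?_ ?_ i
      · simpa using hQpath
      · intro j; simpa using hpath j
    · intro i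
      refine Fin.lastCases ?_ ?_ i
      · simpa using hQlen
      · intro j; simpa using hlen j
    · intro i j hij x hxi hxj
      rcases Fin.eq_castSucc_or_eq_last i with ⟨i', rfl⟩ | rfl <;>
        rcases Fin.eq_castSucc_or_eq_last j with ⟨j', rfl⟩ | rfl
      · rw [Fin.snoc_castSucc] at hxi hxj
        have : i' ≠ j' := fun h => hij (by rw [h])
        exact hdisj i' j' this x hxi hxj
      · rw [Fin.snoc_last] at hxj; rw [Fin.snoc_castSucc] at hxi
        exact hQdisj i' x hxj hxi
      · rw [Fin.snoc_last] at hxi; rw [Fin.snoc_castSucc] at hxj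
        exact hQdisj j' x hxi hxj
      · exact absurd rfl hij
end

section
/- Let t ≥ 1 and f ≥ 0 be integers, let H be an f-EFT t-spanner of a finite simple graph G = (V,E), and let uv ∈ E ∖ E(H). Then H contains ⌊f/t⌋ + 1 pairwise edge-disjoint u–v paths, each containing at most t edges. -/
open SimpleGraph
open scoped ENNReal

/-- If `H` is an `f`-EFT `t`-spanner of `G` (with `t ≥ 1`) and `uv ∈ E(G) ∖ E(H)`, then `H`
contains `⌊f/t⌋ + 1` pairwise edge-disjoint `u`–`v` paths, each with at most `t` edges. -/
theorem stmt3 {V : Type*} [Fintype V] (G H : SimpleGraph V) (t f : ℕ) (ht : 1 ≤ t)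
    (hsp : IsEFTSpanner G H f t) (u v : V) (huv : G.Adj u v) (hnotH : ¬ H.Adj u v) :
    ∃ P : Fin (f / t + 1) → H.Walk u v,
      (∀ i, (P i).IsPath) ∧ (∀ i, (P i).length ≤ t) ∧
      (∀ i j, i ≠ j → ∀ e : Sym2 V, e ∈ (P i).edges → e ∉ (P j).edges) := by
  classical
  obtain ⟨hHG, hsp⟩ := hsp
  suffices h : ∀ k, k ≤ f / t + 1 → ∃ P : Fin k → H.Walk u v,
      (∀ i, (P i).IsPath) ∧ (∀ i, (P i).length ≤ t) ∧
      (∀ i j, i ≠ j → ∀ e : Sym2 V, e ∈ (P i).edges → e ∉ (P j).edges) from h _ le_rfl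
  intro k
  induction k with
  | zero =>
    exact fun _ => ⟨Fin.elim0, fun i => i.elim0, fun i => i.elim0, fun i => i.elim0⟩
  | succ k ih =>
    intro hk
    obtain ⟨P, hpath, hlen, hdisj⟩ := ih (Nat.le_of_succ_le hk)
    set Fs : Finset (Sym2 V) := Finset.univ.biUnion (fun i : Fin k => (P i).edges.toFinset)
      with hFs
    have hmemFs : ∀ e : Sym2 V, e ∈ Fs ↔ ∃ i, e ∈ (P i).edges := by
      intro e
      simp [hFs]
    have hFH : (Fs : Set (Sym2 V)) ⊆ H.edgeSet := by
      intro e he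
      obtain ⟨i, hi⟩ := (hmemFs e).1 he
      exact (P i).edges_subset_edgeSet hi
    have hFG : (Fs : Set (Sym2 V)) ⊆ G.edgeSet := hFH.trans (edgeSet_mono hHG)
    have hcard : Fs.card ≤ f := by
      calc Fs.card ≤ ∑ i : Fin k, ((P i).edges.toFinset).card := Finset.card_biUnion_le
        _ ≤ ∑ _i : Fin k, t := by
            refine Finset.sum_le_sum fun i _ => ?_
            calc ((P i).edges.toFinset).card ≤ (P i).edges.length := (P i).edges.toFinset_card_le
              _ = (P i).length := (P i).length_edges
              _ ≤ t := hlen i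
        _ = k * t := by simp [mul_comm]
        _ ≤ (f / t) * t := Nat.mul_le_mul_right t (Nat.lt_succ_iff.mp hk)
        _ ≤ f := Nat.div_mul_le_self f t
    have huvF : (s(u, v) : Sym2 V) ∉ Fs := fun hmem => hnotH (hFH hmem)
    have hadj : (G.deleteEdges (↑Fs : Set (Sym2 V))).Adj u v := by
      rw [deleteEdges_adj]
      exact ⟨huv, huvF⟩
    have h1 : (G.deleteEdges (↑Fs : Set (Sym2 V))).edist u v ≤ 1 := by
      simpa using edist_le hadj.toWalk
    have h2 := hsp (↑Fs) hFG (by simpa [Set.ncard_coe_finset] using hcard) u v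
    have h3 : (H.deleteEdges (↑Fs : Set (Sym2 V))).edist u v ≤ (t : ℕ∞) := by
      calc (H.deleteEdges (↑Fs : Set (Sym2 V))).edist u v
          ≤ (t : ℕ∞) * (G.deleteEdges (↑Fs : Set (Sym2 V))).edist u v := h2
        _ ≤ (t : ℕ∞) * 1 := by exact mul_le_mul_right h1 _
        _ = (t : ℕ∞) := mul_one _
    have hne : (H.deleteEdges (↑Fs : Set (Sym2 V))).edist u v ≠ ⊤ :=
      fun htop => by simp [htop] at h3
    obtain ⟨p, hp⟩ := exists_walk_of_edist_ne_top hne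
    have hplen : p.length ≤ t := by
      have : (p.length : ℕ∞) ≤ (t : ℕ∞) := hp ▸ h3
      exact_mod_cast this
    set p' := p.bypass with hp'
    have hp'path : p'.IsPath := p.bypass_isPath
    have hp'len : p'.length ≤ t := (Walk.length_bypass_le p).trans hplen
    have hp'edges : ∀ e ∈ p'.edges, e ∈ H.edgeSet ∧ e ∉ Fs := by
      intro e he
      have := p'.edges_subset_edgeSet he
      rw [edgeSet_deleteEdges] at this
      exact ⟨this.1, fun hmem => this.2 hmem⟩
    set q : H.Walk u v := p'.transfer H (fun e he => (hp'edges e he).1) with hq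
    have hqedges : q.edges = p'.edges := p'.edges_transfer _
    have hqdisj : ∀ i : Fin k, ∀ e : Sym2 V, e ∈ q.edges → e ∉ (P i).edges := by
      intro i e he hmem
      exact (hp'edges e (hqedges ▸ he)).2 ((hmemFs e).2 ⟨i, hmem⟩)
    refine ⟨Fin.snoc P q, ?_, ?_, ?_⟩
    · intro i
      rcases Fin.eq_castSucc_or_eq_last i with ⟨j, rfl⟩ | rfl
      · simpa [Fin.snoc_castSucc] using hpath j
      · simpa [Fin.snoc_last] using hp'path.transfer _
    · intro i
      rcases Fin.eq_castSucc_or_eq_last i with ⟨j, rfl⟩ | rfl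
      · simpa [Fin.snoc_castSucc] using hlen j
      · simpa [Fin.snoc_last, hq, Walk.length_transfer] using hp'len
    · intro i j hij e hei hej
      rcases Fin.eq_castSucc_or_eq_last i with ⟨i', rfl⟩ | rfl <;>
        rcases Fin.eq_castSucc_or_eq_last j with ⟨j', rfl⟩ | rfl
      · rw [Fin.snoc_castSucc] at hei hej
        exact hdisj i' j' (fun h => hij (by rw [h])) e hei hej
      · rw [Fin.snoc_castSucc] at hei
        rw [Fin.snoc_last] at hej
        exact hqdisj i' e hej hei
      · rw [Fin.snoc_last] at hei
        rw [Fin.snoc_castSucc] at hej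
        exact hqdisj j' e hei hej
      · exact hij rfl
end

section
/- Let G = (E-edge tree on vertex set V) be a tree rooted at r with |V| ≥ 3, and let OPT be a set of links such that (V, E(G) ∪ OPT) is 2-vertex-connected. Let SOL be a set of links satisfying: (i) for every link {u,v} ∈ OPT, SOL contains a link {u,v'} with d_G(r, LCA(u,v')) ≤ d_G(r, LCA(u,v)) and a link {u',v} with d_G(r, LCA(u',v)) ≤ d_G(r, LCA(u,v)); and (ii) for every vertex a ∈ V, the following auxiliary graph is connected: its nodes are the bad children of a, each representing its subtree G_v, together with (if a has at least one good child) one extra node representing the union of the subtrees of all good children of a, and two nodes are joined by an edge whenever SOL contains a link with one endpoint in the vertex set represented by one node and its other endpoint in the vertex set represented by the other node. Then (V, E(G) ∪ SOL) is 2-vertex-connected. -/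
open SimpleGraph

/-- A graph (on at least 3 vertices) is 2-vertex-connected if it is connected and the deletion of
any single vertex leaves it connected. -/
def TwoVertexConnected {V : Type*} (H : SimpleGraph V) : Prop :=
  H.Connected ∧ ∀ a : V, (H.induce ({a}ᶜ : Set V)).Connected

/-- In a tree `G` rooted at `r`, the vertex `a` lies on the (unique) path from `r` to `v`;
equivalently, `v` belongs to the subtree `G_a` rooted at `a`. -/
def OnRootPath {V : Type*} (G : SimpleGraph V) (r a v : V) : Prop :=
  ∀ p : G.Walk r v, p.IsPath → a ∈ p.support

/-- The vertex set `G_a` of the subtree rooted at `a` (in the tree `G` rooted at `r`). -/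
def subtreeSet {V : Type*} (G : SimpleGraph V) (r a : V) : Set V :=
  {v | OnRootPath G r a v}

/-- `v` is a child of `a` in the tree `G` rooted at `r`. -/
def IsChild {V : Type*} (G : SimpleGraph V) (r a v : V) : Prop :=
  G.Adj a v ∧ OnRootPath G r a v

/-- `a` is the lowest common ancestor of `u` and `v` in the tree `G` rooted at `r`: it lies on
both root paths, and every vertex lying on both root paths is an ancestor of `a`. -/
def IsLCA {V : Type*} (G : SimpleGraph V) (r a u v : V) : Prop :=
  OnRootPath G r a u ∧ OnRootPath G r a v ∧
    ∀ b : V, OnRootPath G r b u → OnRootPath G r b v → OnRootPath G r b a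

/-- A child `v` of `a` is good (w.r.t. the link set `L`): `L` contains a link with one endpoint
in `G_v` and the other endpoint in `V ∖ G_a`. -/
def IsGoodChild {V : Type*} (G : SimpleGraph V) (r : V) (L : Set (Sym2 V)) (a v : V) : Prop :=
  IsChild G r a v ∧ ∃ x ∈ subtreeSet G r v, ∃ y ∈ (subtreeSet G r a)ᶜ, s(x, y) ∈ L

/-- The node set of the auxiliary graph at `a`: one node (a vertex set) for the subtree of each
bad child of `a`, plus — if `a` has at least one good child — one extra node which is the union
of the subtrees of all good children of `a`. -/
def auxParts {V : Type*} (G : SimpleGraph V) (r : V) (L : Set (Sym2 V)) (a : V) :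
    Set (Set V) :=
  {S | ∃ v : V, IsChild G r a v ∧ ¬ IsGoodChild G r L a v ∧ S = subtreeSet G r v} ∪
    {S | (∃ v : V, IsGoodChild G r L a v) ∧
      S = ⋃ v ∈ {v : V | IsGoodChild G r L a v}, subtreeSet G r v}

/-- Two nodes of the auxiliary graph are adjacent (w.r.t. a link set `SOL`) when they are distinct
members of `P` and `SOL` contains a link with one endpoint in each of the two vertex sets. -/
def auxAdj {V : Type*} (SOL : Set (Sym2 V)) (P : Set (Set V)) (A B : Set V) : Prop :=
  A ∈ P ∧ B ∈ P ∧ A ≠ B ∧ ∃ x ∈ A, ∃ y ∈ B, s(x, y) ∈ SOL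

/-- The auxiliary graph with node set `P` and `SOL`-adjacency is connected. -/
def auxConnected {V : Type*} (SOL : Set (Sym2 V)) (P : Set (Set V)) : Prop :=
  ∀ A ∈ P, ∀ B ∈ P, Relation.ReflTransGen (auxAdj SOL P) A B

namespace Stmt9Aux
open SimpleGraph Walk List
variable {V : Type*} {G : SimpleGraph V}

noncomputable def rp (hG : G.IsTree) (r v : V) : G.Walk r v :=
  (hG.existsUnique_path r v).choose

lemma rp_isPath (hG : G.IsTree) (r v : V) : (rp hG r v).IsPath :=
  (hG.existsUnique_path r v).choose_spec.1

lemma eq_rp (hG : G.IsTree) {r v : V} {q : G.Walk r v} (hq : q.IsPath) : q = rp hG r v :=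
  (hG.existsUnique_path r v).choose_spec.2 q hq

lemma onRootPath_iff (hG : G.IsTree) {r a v : V} :
    OnRootPath G r a v ↔ a ∈ (rp hG r v).support := by
  constructor
  · exact fun h => h _ (rp_isPath hG r v)
  · intro h p hp
    rwa [eq_rp hG hp]

lemma prefix_of_mem (hG : G.IsTree) {r a v : V} (h : a ∈ (rp hG r v).support) :
    (rp hG r a).support <+: (rp hG r v).support := by
  classical
  have ht : ((rp hG r v).takeUntil a h) = rp hG r a := eq_rp hG ((rp_isPath hG r v).takeUntil h)
  refine ⟨((rp hG r v).dropUntil a h).support.tail, ?_⟩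
  rw [← ht, ← Walk.support_append, (rp hG r v).take_spec h]

lemma mem_of_prefix (hG : G.IsTree) {r a v : V}
    (h : (rp hG r a).support <+: (rp hG r v).support) : a ∈ (rp hG r v).support :=
  h.subset ((rp hG r a).end_mem_support)

lemma mem_trans (hG : G.IsTree) {r a b c : V} (h1 : a ∈ (rp hG r b).support)
    (h2 : b ∈ (rp hG r c).support) : a ∈ (rp hG r c).support :=
  (prefix_of_mem hG h2).subset h1

lemma eq_of_mem_mem (hG : G.IsTree) {r a v : V} (h1 : a ∈ (rp hG r v).support)
    (h2 : v ∈ (rp hG r a).support) : a = v := by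
  classical
  have e1 := congrArg Walk.length ((rp hG r v).take_spec h1)
  have e2 := congrArg Walk.length ((rp hG r a).take_spec h2)
  rw [Walk.length_append] at e1 e2
  rw [eq_rp hG ((rp_isPath hG r v).takeUntil h1)] at e1
  rw [eq_rp hG ((rp_isPath hG r a).takeUntil h2)] at e2
  exact Walk.eq_of_length_eq_zero (by omega : ((rp hG r v).dropUntil a h1).length = 0)

lemma isPath_concat {u v w : V} {p : G.Walk u v} (hp : p.IsPath) (h : G.Adj v w)
    (hw : w ∉ p.support) : (p.concat h).IsPath := by
  rw [Walk.isPath_def, Walk.support_concat, List.nodup_append]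
  exact ⟨hp.support_nodup, List.nodup_singleton w, by
    rintro x hx y hy rfl; simp at hy; exact hw (hy ▸ hx)⟩


lemma mem_subtree (hG : G.IsTree) {r a v : V} :
    v ∈ subtreeSet G r a ↔ a ∈ (rp hG r v).support := onRootPath_iff hG

lemma child_support (hG : G.IsTree) {r a v : V} (h : IsChild G r a v) :
    (rp hG r v).support = (rp hG r a).support ++ [v] := by
  have hav : a ∈ (rp hG r v).support := (onRootPath_iff hG).1 h.2
  have hva : v ∉ (rp hG r a).support := fun hv => h.1.ne (eq_of_mem_mem hG hav hv)
  have hp : ((rp hG r a).concat h.1).IsPath := isPath_concat (rp_isPath hG r a) h.1 hva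
  rw [← eq_rp hG hp, Walk.support_concat]

lemma notMem_child (hG : G.IsTree) {r a v : V} (h : IsChild G r a v) :
    v ∉ (rp hG r a).support :=
  fun hv => h.1.ne (eq_of_mem_mem hG ((onRootPath_iff hG).1 h.2) hv)

lemma exists_child (hG : G.IsTree) {r a x : V} (hxa : x ≠ a)
    (hax : a ∈ (rp hG r x).support) : ∃ v, IsChild G r a v ∧ v ∈ (rp hG r x).support := by
  classical
  obtain ⟨w, hadj, d', hd⟩ := ((rp hG r x).dropUntil a hax).exists_eq_cons_of_ne (Ne.symm hxa)
  have ht : (rp hG r x).takeUntil a hax = rp hG r a := eq_rp hG ((rp_isPath hG r x).takeUntil hax)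
  have hnd : ((rp hG r x).takeUntil a hax).support.Disjoint
      ((rp hG r x).dropUntil a hax).support.tail := by
    have h := (rp_isPath hG r x).support_nodup
    rw [← (rp hG r x).take_spec hax, Walk.support_append, List.nodup_append] at h
    exact fun z hz1 hz2 => h.2.2 z hz1 z hz2 rfl
  have hw_not : w ∉ ((rp hG r x).takeUntil a hax).support := by
    intro hw
    refine hnd hw ?_
    rw [hd]
    simp
  have hp := isPath_concat ((rp_isPath hG r x).takeUntil hax) hadj hw_not
  refine ⟨w, ⟨hadj, (onRootPath_iff hG).2 ?_⟩, ?_⟩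
  · rw [← eq_rp hG hp, Walk.support_concat, List.mem_append]
    exact Or.inl ((rp hG r x).takeUntil a hax).end_mem_support
  · refine (rp hG r x).support_dropUntil_subset hax ?_
    rw [hd]; simp

lemma child_eq (hG : G.IsTree) {r a v w x : V} (hv : IsChild G r a v) (hw : IsChild G r a w)
    (hvx : v ∈ (rp hG r x).support) (hwx : w ∈ (rp hG r x).support) : v = w := by
  have p1 := prefix_of_mem hG hvx
  have p2 := prefix_of_mem hG hwx
  have hl : (rp hG r v).support.length = (rp hG r w).support.length := by
    rw [child_support hG hv, child_support hG hw]; simp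
  have heq := (List.prefix_of_prefix_length_le p1 p2 (le_of_eq hl)).eq_of_length hl
  rw [child_support hG hv, child_support hG hw] at heq
  simpa using List.append_cancel_left heq

lemma subtree_walk (hG : G.IsTree) {r a v x : V} (hch : IsChild G r a v)
    (hx : v ∈ (rp hG r x).support) : ∃ W : G.Walk v x, a ∉ W.support := by
  classical
  refine ⟨(rp hG r x).dropUntil v hx, fun ha => ?_⟩
  have ht : (rp hG r x).takeUntil v hx = rp hG r v := eq_rp hG ((rp_isPath hG r x).takeUntil hx)
  have hnd : ((rp hG r x).takeUntil v hx).support.Disjoint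
      ((rp hG r x).dropUntil v hx).support.tail := by
    have h := (rp_isPath hG r x).support_nodup
    rw [← (rp hG r x).take_spec hx, Walk.support_append, List.nodup_append] at h
    exact fun z hz1 hz2 => h.2.2 z hz1 z hz2 rfl
  have hav : a ∈ ((rp hG r x).takeUntil v hx).support := by
    rw [ht]; exact (onRootPath_iff hG).1 hch.2
  have htail : a ∈ ((rp hG r x).dropUntil v hx).support.tail := by
    rw [((rp hG r x).dropUntil v hx).support_eq_cons, List.mem_cons] at ha
    rcases ha with h | h
    · exact absurd h hch.1.ne
    · exact h
  exact hnd hav htail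

lemma dist_eq (hG : G.IsTree) (r v : V) : G.dist r v = (rp hG r v).length := by
  obtain ⟨p, hp, hl⟩ := hG.isConnected.exists_path_of_dist r v
  rw [← hl, eq_rp hG hp]

lemma adj_mem_or (hG : G.IsTree) {r x y : V} (h : G.Adj x y) :
    x ∈ (rp hG r y).support ∨ y ∈ (rp hG r x).support := by
  by_cases hy : y ∈ (rp hG r x).support
  · exact Or.inr hy
  · left
    have hp := isPath_concat (rp_isPath hG r x) h hy
    rw [← eq_rp hG hp, Walk.support_concat, List.mem_append]
    exact Or.inl (rp hG r x).end_mem_support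

lemma not_adj_cross (hG : G.IsTree) {r a x y : V} (hxa : x ≠ a)
    (hax : a ∈ (rp hG r x).support) (hay : a ∉ (rp hG r y).support) : ¬ G.Adj x y := by
  intro h
  rcases adj_mem_or hG (r := r) h with hxy | hyx
  · exact hay (mem_trans hG hax hxy)
  · have hch : IsChild G r y x := ⟨h.symm, (onRootPath_iff hG).2 hyx⟩
    rw [child_support hG hch, List.mem_append] at hax
    rcases hax with h' | h'
    · exact hay h'
    · simp at h'
      exact hxa h'.symm

lemma lca_exists (hG : G.IsTree) [Fintype V] (r u w : V) : ∃ c, IsLCA G r c u w := by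
  classical
  set s : Finset V :=
    Finset.univ.filter (fun b => b ∈ (rp hG r u).support ∧ b ∈ (rp hG r w).support) with hs
  have hne : s.Nonempty := ⟨r, by simp [hs, Walk.start_mem_support]⟩
  obtain ⟨c, hc, hmax⟩ := Finset.exists_max_image s (fun b => (rp hG r b).length) hne
  rw [hs, Finset.mem_filter] at hc
  refine ⟨c, (onRootPath_iff hG).2 hc.2.1, (onRootPath_iff hG).2 hc.2.2, ?_⟩
  intro b hbu hbw
  have hb : b ∈ s := by
    rw [hs, Finset.mem_filter]
    exact ⟨Finset.mem_univ _, (onRootPath_iff hG).1 hbu, (onRootPath_iff hG).1 hbw⟩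
  have hlen := hmax b hb
  have p1 := prefix_of_mem hG ((onRootPath_iff hG).1 hbu)
  have p2 := prefix_of_mem hG hc.2.1
  have : (rp hG r b).support <+: (rp hG r c).support := by
    refine List.prefix_of_prefix_length_le p1 p2 ?_
    rw [Walk.length_support, Walk.length_support]
    omega
  exact (onRootPath_iff hG).2 (mem_of_prefix hG this)

lemma good_sol (hG : G.IsTree) [Fintype V] {r a v x0 y0 : V} {OPT SOL : Set (Sym2 V)}
    (hi1 : ∀ u w : V, s(u, w) ∈ OPT →
      ∃ v' : V, s(u, v') ∈ SOL ∧ ∀ c d : V, IsLCA G r c u v' → IsLCA G r d u w →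
        G.dist r c ≤ G.dist r d)
    (hch : IsChild G r a v) (hx0 : v ∈ (rp hG r x0).support)
    (hy0 : a ∉ (rp hG r y0).support) (hopt : s(x0, y0) ∈ OPT) :
    ∃ v', s(x0, v') ∈ SOL ∧ a ∉ (rp hG r v').support := by
  classical
  obtain ⟨v', hsol, hcond⟩ := hi1 x0 y0 hopt
  refine ⟨v', hsol, fun hav' => ?_⟩
  obtain ⟨c, hc⟩ := lca_exists hG r x0 y0
  obtain ⟨c', hc'⟩ := lca_exists hG r x0 v'
  have hdist := hcond c' c hc' hc
  have hcx0 : c ∈ (rp hG r x0).support := (onRootPath_iff hG).1 hc.1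
  have hcy0 : c ∈ (rp hG r y0).support := (onRootPath_iff hG).1 hc.2.1
  have hax0 : a ∈ (rp hG r x0).support := mem_trans hG ((onRootPath_iff hG).1 hch.2) hx0
  have hca : (rp hG r c).support <+: (rp hG r a).support := by
    rcases List.prefix_or_prefix_of_prefix (prefix_of_mem hG hcx0) (prefix_of_mem hG hax0)
      with h | h
    · exact h
    · exact absurd (mem_trans hG (mem_of_prefix hG h) hcy0) hy0
  have hcnea : c ≠ a := fun h => hy0 (h ▸ hcy0)
  have hlt : (rp hG r c).length < (rp hG r a).length := by
    have hle := hca.length_le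
    rw [Walk.length_support, Walk.length_support] at hle
    rcases lt_or_eq_of_le hle with h | h
    · omega
    · exfalso
      have := hca.eq_of_length (by rw [Walk.length_support, Walk.length_support]; omega)
      exact hcnea (eq_of_mem_mem hG
        (this ▸ (rp hG r c).end_mem_support) (this ▸ (rp hG r a).end_mem_support))
  have hac' : a ∈ (rp hG r c').support :=
    (onRootPath_iff hG).1 (hc'.2.2 a ((onRootPath_iff hG).2 hax0) ((onRootPath_iff hG).2 hav'))
  have hle2 : (rp hG r a).length ≤ (rp hG r c').length := by
    have h5 := (prefix_of_mem hG hac').length_le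
    rw [Walk.length_support, Walk.length_support] at h5
    omega
  have d1 := dist_eq hG r c
  have d2 := dist_eq hG r c'
  omega

lemma reach_of_walk {H : SimpleGraph V} {s : Set V} :
    ∀ {x y : V} (W : H.Walk x y), (∀ z ∈ W.support, z ∈ s) →
      ∀ (hx : x ∈ s) (hy : y ∈ s), (H.induce s).Reachable ⟨x, hx⟩ ⟨y, hy⟩ := by
  intro x y W
  induction W with
  | nil => exact fun _ _ _ => Reachable.refl _
  | @cons u w y h p ih =>
    intro hW hx hy
    have hw : w ∈ s := hW w (by simp)
    have h1 : (H.induce s).Adj ⟨u, hx⟩ ⟨w, hw⟩ := h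
    exact h1.reachable.trans (ih (fun z hz => hW z (by simp [hz])) hw hy)

lemma exists_cross {H : SimpleGraph V} {s : Set V} {A : Set V} :
    ∀ {x y : ↑s} (_ : (H.induce s).Walk x y), (x : V) ∈ A → (y : V) ∉ A →
      ∃ p q : V, p ∈ s ∧ q ∈ s ∧ p ∈ A ∧ q ∉ A ∧ H.Adj p q := by
  intro x y W
  induction W with
  | nil => exact fun h1 h2 => absurd h1 h2
  | @cons u v w h p ih =>
    intro h1 h2
    by_cases hv : (v : V) ∈ A
    · exact ih hv h2
    · exact ⟨u, v, u.2, v.2, h1, hv, h⟩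

end Stmt9Aux

/-- If `OPT` augments the tree `G` to a 2-vertex-connected graph and `SOL` is a link set such
that (i) for every link `{u,v} ∈ OPT`, `SOL` contains a link `{u,v'}` with
`d_G(r, LCA(u,v')) ≤ d_G(r, LCA(u,v))` and a link `{u',v}` with
`d_G(r, LCA(u',v)) ≤ d_G(r, LCA(u,v))`, and (ii) for every vertex `a`, the auxiliary graph at `a`
(bad-child subtrees plus the union of good-child subtrees, with `SOL`-adjacency) is connected,
then `SOL` also augments `G` to a 2-vertex-connected graph. -/

theorem stmt9 {V : Type*} [Fintype V] (G : SimpleGraph V) (r : V) (hG : G.IsTree)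
    (h3 : 3 ≤ Fintype.card V)
    (OPT SOL : Set (Sym2 V))
    (hOPT : TwoVertexConnected (SimpleGraph.fromEdgeSet (G.edgeSet ∪ OPT)))
    (hi : ∀ u v : V, s(u, v) ∈ OPT →
      (∃ v' : V, s(u, v') ∈ SOL ∧ ∀ a b : V, IsLCA G r a u v' → IsLCA G r b u v →
        G.dist r a ≤ G.dist r b) ∧
      (∃ u' : V, s(u', v) ∈ SOL ∧ ∀ a b : V, IsLCA G r a u' v → IsLCA G r b u v →
        G.dist r a ≤ G.dist r b))
    (hii : ∀ a : V, auxConnected SOL (auxParts G r OPT a)) :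
    TwoVertexConnected (SimpleGraph.fromEdgeSet (G.edgeSet ∪ SOL)) := by
  classical
  set H := SimpleGraph.fromEdgeSet (G.edgeSet ∪ SOL) with hH
  have hle : G ≤ H := by
    intro x y hxy
    rw [hH, SimpleGraph.fromEdgeSet_adj]
    exact ⟨Or.inl (G.mem_edgeSet.2 hxy), hxy.ne⟩
  refine ⟨hG.isConnected.mono hle, ?_⟩
  intro a
  rw [SimpleGraph.connected_iff]
  refine ⟨?_, ?_⟩
  swap
  · obtain ⟨b, hb⟩ := Fintype.exists_ne_of_one_lt_card (by omega) a
    exact ⟨⟨b, Set.mem_compl_singleton_iff.2 hb⟩⟩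
  have hmem : ∀ {x : V}, x ≠ a → x ∈ ({a}ᶜ : Set V) :=
    fun hx => Set.mem_compl_singleton_iff.2 hx
  have hne_of_not : ∀ {z : V}, a ∉ (Stmt9Aux.rp hG r z).support → z ≠ a :=
    fun h hz => h (hz ▸ (Stmt9Aux.rp hG r a).end_mem_support)
  -- R0 : walks in G avoiding a give reachability in the induced graph
  have R0 : ∀ (x y : V) (W : G.Walk x y), a ∉ W.support →
      ∀ (hx : x ∈ ({a}ᶜ : Set V)) (hy : y ∈ ({a}ᶜ : Set V)),
      (H.induce ({a}ᶜ : Set V)).Reachable ⟨x, hx⟩ ⟨y, hy⟩ := by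
    intro x y W hW hx hy
    have hWH : ∀ e ∈ W.edges, e ∈ H.edgeSet := fun e he =>
      (SimpleGraph.edgeSet_mono hle) (W.edges_subset_edgeSet he)
    refine Stmt9Aux.reach_of_walk (W.transfer H hWH) ?_ hx hy
    rw [Walk.support_transfer]
    intro z hz
    exact Set.mem_compl_singleton_iff.2 (fun h => hW (h ▸ hz))
  -- R1 : two vertices in the subtree of the same child of a
  have R1 : ∀ (v x y : V), IsChild G r a v → v ∈ (Stmt9Aux.rp hG r x).support →
      v ∈ (Stmt9Aux.rp hG r y).support →
      ∀ (hx : x ∈ ({a}ᶜ : Set V)) (hy : y ∈ ({a}ᶜ : Set V)),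
      (H.induce ({a}ᶜ : Set V)).Reachable ⟨x, hx⟩ ⟨y, hy⟩ := by
    intro v x y hch hvx hvy hx hy
    obtain ⟨W1, hW1⟩ := Stmt9Aux.subtree_walk hG hch hvx
    obtain ⟨W2, hW2⟩ := Stmt9Aux.subtree_walk hG hch hvy
    refine R0 x y (W1.reverse.append W2) ?_ hx hy
    intro ha
    rw [Walk.mem_support_append_iff, Walk.support_reverse, List.mem_reverse] at ha
    tauto
  -- R2 : two vertices outside the subtree of a
  have R2 : ∀ (x y : V), a ∉ (Stmt9Aux.rp hG r x).support → a ∉ (Stmt9Aux.rp hG r y).support →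
      ∀ (hx : x ∈ ({a}ᶜ : Set V)) (hy : y ∈ ({a}ᶜ : Set V)),
      (H.induce ({a}ᶜ : Set V)).Reachable ⟨x, hx⟩ ⟨y, hy⟩ := by
    intro x y hax hay hx hy
    refine R0 x y ((Stmt9Aux.rp hG r x).reverse.append (Stmt9Aux.rp hG r y)) ?_ hx hy
    intro ha
    rw [Walk.mem_support_append_iff, Walk.support_reverse, List.mem_reverse] at ha
    tauto
  -- R3 : SOL links give edges
  have R3 : ∀ (x y : V) (hx : x ∈ ({a}ᶜ : Set V)) (hy : y ∈ ({a}ᶜ : Set V)), x ≠ y →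
      s(x, y) ∈ SOL → (H.induce ({a}ᶜ : Set V)).Reachable ⟨x, hx⟩ ⟨y, hy⟩ := by
    intro x y hx hy hne hsol
    have hadj : H.Adj x y := by
      rw [hH, SimpleGraph.fromEdgeSet_adj]
      exact ⟨Or.inr hsol, hne⟩
    have h2 : (H.induce ({a}ᶜ : Set V)).Adj ⟨x, hx⟩ ⟨y, hy⟩ := hadj
    exact h2.reachable
  -- R4 : from the subtree of a good child one can escape outside the subtree of a
  have R4 : ∀ (v x : V), IsGoodChild G r OPT a v → v ∈ (Stmt9Aux.rp hG r x).support →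
      ∃ z : V, a ∉ (Stmt9Aux.rp hG r z).support ∧
        ∀ (hx : x ∈ ({a}ᶜ : Set V)) (hz : z ∈ ({a}ᶜ : Set V)),
          (H.induce ({a}ᶜ : Set V)).Reachable ⟨x, hx⟩ ⟨z, hz⟩ := by
    intro v x hgood hvx
    obtain ⟨hch, x0, hx0, y0, hy0, hoptl⟩ := hgood
    have hx0' : v ∈ (Stmt9Aux.rp hG r x0).support := (Stmt9Aux.mem_subtree hG).1 hx0
    have hy0' : a ∉ (Stmt9Aux.rp hG r y0).support :=
      fun h => hy0 ((Stmt9Aux.mem_subtree hG).2 h)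
    obtain ⟨v', hsol, hav'⟩ :=
      Stmt9Aux.good_sol hG (fun u w h => (hi u w h).1) hch hx0' hy0' hoptl
    have hax0 : a ∈ (Stmt9Aux.rp hG r x0).support :=
      Stmt9Aux.mem_trans hG ((Stmt9Aux.onRootPath_iff hG).1 hch.2) hx0'
    have hx0a : x0 ≠ a := by
      intro h
      subst h
      exact hch.1.ne (Stmt9Aux.eq_of_mem_mem hG ((Stmt9Aux.onRootPath_iff hG).1 hch.2) hx0')
    have hx0v' : x0 ≠ v' := fun h => hav' (h ▸ hax0)
    refine ⟨v', hav', fun hx hz => ?_⟩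
    exact (R1 v x x0 hch hvx hx0' hx (hmem hx0a)).trans
      (R3 x0 v' (hmem hx0a) (hmem (hne_of_not hav')) hx0v' hsol)
  -- facts about the parts
  have hpart_ne : ∀ S ∈ auxParts G r OPT a, ∀ x ∈ S, x ≠ a := by
    rintro S (⟨v, hch, _, rfl⟩ | ⟨_, rfl⟩) x hxS
    · intro h
      subst h
      exact hch.1.ne (Stmt9Aux.eq_of_mem_mem hG ((Stmt9Aux.onRootPath_iff hG).1 hch.2)
        ((Stmt9Aux.mem_subtree hG).1 hxS))
    · obtain ⟨w, hw, hxw⟩ := Set.mem_iUnion₂.1 hxS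
      intro h
      subst h
      exact hw.1.1.ne (Stmt9Aux.eq_of_mem_mem hG ((Stmt9Aux.onRootPath_iff hG).1 hw.1.2)
        ((Stmt9Aux.mem_subtree hG).1 hxw))
  have hpart_reach : ∀ S ∈ auxParts G r OPT a, ∀ x ∈ S, ∀ y ∈ S,
      ∀ (hx : x ∈ ({a}ᶜ : Set V)) (hy : y ∈ ({a}ᶜ : Set V)),
      (H.induce ({a}ᶜ : Set V)).Reachable ⟨x, hx⟩ ⟨y, hy⟩ := by
    rintro S (⟨v, hch, _, rfl⟩ | ⟨_, rfl⟩) x hxS y hyS hx hy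
    · exact R1 v x y hch ((Stmt9Aux.mem_subtree hG).1 hxS)
        ((Stmt9Aux.mem_subtree hG).1 hyS) hx hy
    · obtain ⟨v, hv, hxv⟩ := Set.mem_iUnion₂.1 hxS
      obtain ⟨w, hw, hyw⟩ := Set.mem_iUnion₂.1 hyS
      obtain ⟨zx, hzx, hrx⟩ := R4 v x hv ((Stmt9Aux.mem_subtree hG).1 hxv)
      obtain ⟨zy, hzy, hry⟩ := R4 w y hw ((Stmt9Aux.mem_subtree hG).1 hyw)
      exact ((hrx hx (hmem (hne_of_not hzx))).trans
        (R2 zx zy hzx hzy (hmem (hne_of_not hzx)) (hmem (hne_of_not hzy)))).trans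
        (hry hy (hmem (hne_of_not hzy))).symm
  have hdisj : ∀ S ∈ auxParts G r OPT a, ∀ T ∈ auxParts G r OPT a, S ≠ T →
      ∀ x ∈ S, x ∉ T := by
    rintro S hS T hT hST x hxS hxT
    apply hST
    rcases hS with ⟨v, hchv, hbadv, rfl⟩ | ⟨hexv, rfl⟩ <;>
      rcases hT with ⟨w, hchw, hbadw, rfl⟩ | ⟨hexw, rfl⟩
    · rw [Stmt9Aux.child_eq hG hchv hchw ((Stmt9Aux.mem_subtree hG).1 hxS)
        ((Stmt9Aux.mem_subtree hG).1 hxT)]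
    · exfalso
      obtain ⟨w, hw, hxw⟩ := Set.mem_iUnion₂.1 hxT
      exact hbadv ((Stmt9Aux.child_eq hG hchv hw.1 ((Stmt9Aux.mem_subtree hG).1 hxS)
        ((Stmt9Aux.mem_subtree hG).1 hxw)) ▸ hw)
    · exfalso
      obtain ⟨w, hw, hxw⟩ := Set.mem_iUnion₂.1 hxS
      exact hbadw ((Stmt9Aux.child_eq hG hw.1 hchw ((Stmt9Aux.mem_subtree hG).1 hxw)
        ((Stmt9Aux.mem_subtree hG).1 hxT)).symm ▸ hw)
    · rfl
  -- R7 : chains in the auxiliary graph give reachability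
  have R7 : ∀ S T : Set V, Relation.ReflTransGen (auxAdj SOL (auxParts G r OPT a)) S T →
      S ∈ auxParts G r OPT a → ∀ x ∈ S, ∀ y ∈ T,
      ∀ (hx : x ∈ ({a}ᶜ : Set V)) (hy : y ∈ ({a}ᶜ : Set V)),
      (H.induce ({a}ᶜ : Set V)).Reachable ⟨x, hx⟩ ⟨y, hy⟩ := by
    intro S T hchain
    induction hchain with
    | refl => exact fun hS x hxS y hyS hx hy => hpart_reach S hS x hxS y hyS hx hy
    | @tail T' T hst hadj ih =>
      intro hS x hxS y hyS hx hy
      obtain ⟨hT', hT, hTT', p, hp, q, hq, hsol⟩ := hadj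
      have hpq : p ≠ q := fun h => (hdisj _ hT' _ hT hTT' p hp) (h ▸ hq)
      have hpa : p ≠ a := hpart_ne _ hT' p hp
      have hqa : q ≠ a := hpart_ne _ hT q hq
      exact ((ih hS x hxS p hp hx (hmem hpa)).trans
        (R3 p q (hmem hpa) (hmem hqa) hpq hsol)).trans
        (hpart_reach _ hT q hq y hyS (hmem hqa) hy)
  -- R8 : if a ≠ r and the subtree of a is nontrivial, then a has a good child
  have R8 : a ≠ r → ∀ x : V, x ≠ a → a ∈ (Stmt9Aux.rp hG r x).support →
      ∃ w, IsGoodChild G r OPT a w := by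
    intro har x hxa hax
    have hra : a ∉ (Stmt9Aux.rp hG r r).support := by
      intro h
      rw [← Stmt9Aux.eq_rp hG (Walk.IsPath.nil (u := r))] at h
      simp at h
      exact har h
    obtain ⟨W⟩ := hOPT.2 a ⟨x, hmem hxa⟩ ⟨r, hmem (Ne.symm har)⟩
    obtain ⟨p, q, hps, hqs, hpA, hqA, hpq⟩ :=
      Stmt9Aux.exists_cross (A := subtreeSet G r a) W ((Stmt9Aux.mem_subtree hG).2 hax)
        (fun h => hra ((Stmt9Aux.mem_subtree hG).1 h))
    rw [SimpleGraph.fromEdgeSet_adj] at hpq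
    obtain ⟨hpq', hne⟩ := hpq
    have hpa : p ≠ a := Set.mem_compl_singleton_iff.1 hps
    have hap : a ∈ (Stmt9Aux.rp hG r p).support := (Stmt9Aux.mem_subtree hG).1 hpA
    have haq : a ∉ (Stmt9Aux.rp hG r q).support :=
      fun h => hqA ((Stmt9Aux.mem_subtree hG).2 h)
    rcases hpq' with hGe | hOe
    · exact absurd (G.mem_edgeSet.1 hGe) (Stmt9Aux.not_adj_cross hG hpa hap haq)
    · obtain ⟨w, hchw, hwp⟩ := Stmt9Aux.exists_child hG hpa hap
      exact ⟨w, hchw, p, (Stmt9Aux.mem_subtree hG).2 hwp,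
        q, fun h => haq ((Stmt9Aux.mem_subtree hG).1 h), hOe⟩
  -- main preconnectedness proof
  rintro ⟨x, hx⟩ ⟨y, hy⟩
  have hxa : x ≠ a := Set.mem_compl_singleton_iff.1 hx
  have hya : y ≠ a := Set.mem_compl_singleton_iff.1 hy
  by_cases har : a = r
  · subst har
    obtain ⟨v, hchv, hvx⟩ := Stmt9Aux.exists_child hG hxa (Stmt9Aux.rp hG a x).start_mem_support
    obtain ⟨w, hchw, hwy⟩ := Stmt9Aux.exists_child hG hya (Stmt9Aux.rp hG a y).start_mem_support
    have hbad : ∀ u : V, ¬ IsGoodChild G a OPT a u := by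
      rintro u ⟨_, x0, _, y0, hy0, _⟩
      exact hy0 ((Stmt9Aux.mem_subtree hG).2 (Stmt9Aux.rp hG a y0).start_mem_support)
    have hSv : subtreeSet G a v ∈ auxParts G a OPT a := Or.inl ⟨v, hchv, hbad v, rfl⟩
    have hSw : subtreeSet G a w ∈ auxParts G a OPT a := Or.inl ⟨w, hchw, hbad w, rfl⟩
    exact R7 _ _ (hii a _ hSv _ hSw) hSv x ((Stmt9Aux.mem_subtree hG).2 hvx)
      y ((Stmt9Aux.mem_subtree hG).2 hwy) hx hy
  · have hra : a ∉ (Stmt9Aux.rp hG r r).support := by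
      intro h
      rw [← Stmt9Aux.eq_rp hG (Walk.IsPath.nil (u := r))] at h
      simp at h
      exact har h
    have hrc : r ∈ ({a}ᶜ : Set V) := hmem (Ne.symm har)
    have main : ∀ (z : V) (hz : z ∈ ({a}ᶜ : Set V)),
        (H.induce ({a}ᶜ : Set V)).Reachable ⟨z, hz⟩ ⟨r, hrc⟩ := by
      intro z hz
      have hza : z ≠ a := Set.mem_compl_singleton_iff.1 hz
      by_cases haz : a ∈ (Stmt9Aux.rp hG r z).support
      · obtain ⟨v, hchv, hvz⟩ := Stmt9Aux.exists_child hG hza haz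
        obtain ⟨w, hgw⟩ := R8 har z hza haz
        by_cases hgv : IsGoodChild G r OPT a v
        · obtain ⟨t, ht, hrt⟩ := R4 v z hgv hvz
          exact (hrt hz (hmem (hne_of_not ht))).trans
            (R2 t r ht hra (hmem (hne_of_not ht)) hrc)
        · have hSv : subtreeSet G r v ∈ auxParts G r OPT a := Or.inl ⟨v, hchv, hgv, rfl⟩
          have hU : (⋃ u ∈ {u : V | IsGoodChild G r OPT a u}, subtreeSet G r u) ∈
              auxParts G r OPT a := Or.inr ⟨⟨w, hgw⟩, rfl⟩
          have hwU : w ∈ ⋃ u ∈ {u : V | IsGoodChild G r OPT a u}, subtreeSet G r u :=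
            Set.mem_biUnion hgw
              ((Stmt9Aux.mem_subtree hG).2 (Stmt9Aux.rp hG r w).end_mem_support)
          have hwa : w ≠ a := hpart_ne _ hU w hwU
          have h1 := R7 _ _ (hii a _ hSv _ hU) hSv z ((Stmt9Aux.mem_subtree hG).2 hvz)
            w hwU hz (hmem hwa)
          obtain ⟨t, ht, hrt⟩ := R4 w w hgw (Stmt9Aux.rp hG r w).end_mem_support
          exact (h1.trans (hrt (hmem hwa) (hmem (hne_of_not ht)))).trans
            (R2 t r ht hra (hmem (hne_of_not ht)) hrc)
      · exact R2 z r haz hra hz hrc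
    exact (main x hx).trans (main y hy).symm
end

section
/- Let G = (V,E) be a 2-vertex-connected simple graph on n ≥ 3 vertices that is edge-minimal 2-vertex-connected, i.e., for every edge e ∈ E, the graph G − e is not 2-vertex-connected. Then |E| ≤ 2n − 2. -/
open SimpleGraph

section Aux

open SimpleGraph Walk

variable {V : Type*} {G : SimpleGraph V}

lemma takeUntil_cons' [DecidableEq V] {v v' w z : V} (h : G.Adj v v') (q : G.Walk v' w)
    (hz : z ∈ (Walk.cons h q).support) (hne : v ≠ z) (hz' : z ∈ q.support) :
    (Walk.cons h q).takeUntil z hz = Walk.cons h (q.takeUntil z hz') := by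
  simp [Walk.takeUntil, hne]

lemma exists_takeUntil_all [DecidableEq V] {u w : V} (p : G.Walk u w) (N : Finset V)
    (hne : N.Nonempty) (hsub : ∀ y ∈ N, y ∈ p.support) :
    ∃ z, ∃ (_ : z ∈ N) (hz : z ∈ p.support), ∀ y ∈ N, y ∈ (p.takeUntil z hz).support := by
  induction p generalizing N with
  | nil =>
    rename_i d
    obtain ⟨z, hzN⟩ := hne
    have hz := hsub z hzN
    refine ⟨z, hzN, hz, fun y hy => ?_⟩
    have hyu : y = d := by simpa using hsub y hy
    subst hyu
    exact Walk.start_mem_support _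
  | cons h q ih =>
    rename_i a b c
    by_cases hN : ∀ y ∈ N, y = a
    · obtain ⟨z, hzN⟩ := hne
      have hz := hsub z hzN
      refine ⟨z, hzN, hz, fun y hy => ?_⟩
      have : y = a := hN y hy
      subst this
      exact Walk.start_mem_support _
    · push_neg at hN
      obtain ⟨y0, hy0N, hy0⟩ := hN
      have hne' : (N.erase a).Nonempty := ⟨y0, Finset.mem_erase.2 ⟨hy0, hy0N⟩⟩
      have hsub' : ∀ y ∈ N.erase a, y ∈ q.support := by
        intro y hy
        have := hsub y (Finset.mem_of_mem_erase hy)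
        rw [Walk.support_cons, List.mem_cons] at this
        exact this.resolve_left (Finset.ne_of_mem_erase hy)
      obtain ⟨z, hzN', hzq, hall⟩ := ih (N.erase a) hne' hsub'
      have hznea : a ≠ z := fun hh => (Finset.ne_of_mem_erase hzN') hh.symm
      have hzc : z ∈ (Walk.cons h q).support := by
        rw [Walk.support_cons, List.mem_cons]; exact Or.inr hzq
      refine ⟨z, Finset.mem_of_mem_erase hzN', hzc, fun y hy => ?_⟩
      rw [takeUntil_cons' h q hzc hznea hzq, Walk.support_cons, List.mem_cons]
      by_cases hya : y = a
      · exact Or.inl hya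
      · exact Or.inr (hall y (Finset.mem_erase.2 ⟨hya, hy⟩))

lemma edge_start_eq_snd {u w z : V} (p : G.Walk u w) (hp : p.IsPath) (hzu : z ≠ u)
    (h : s(u, z) ∈ p.edges) : z = p.getVert 1 := by
  cases p with
  | nil => simp at h
  | cons hadj q =>
    rw [Walk.edges_cons, List.mem_cons] at h
    rcases h with h | h
    · rw [Sym2.congr_right] at h
      rw [h, Walk.getVert_cons_succ, Walk.getVert_zero]
    · exfalso
      have := Walk.fst_mem_support_of_mem_edges q h
      rw [Walk.cons_isPath_iff] at hp
      exact hp.2 this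

lemma edge_not_mem_of_two_le {u z : V} (q : G.Walk u z) (hq : q.IsPath) (hlen : 2 ≤ q.length) :
    s(u, z) ∉ q.edges := by
  intro h
  have hzu : z ≠ u := by
    rintro rfl
    rw [Walk.isPath_iff_eq_nil] at hq
    simp [hq] at hlen
  have hsnd := edge_start_eq_snd q hq hzu h
  cases q with
  | nil => simp at h
  | cons hadj q' =>
    rw [Walk.getVert_cons_succ, Walk.getVert_zero] at hsnd
    rw [Walk.cons_isPath_iff] at hq
    rcases hq with ⟨hq', _⟩
    subst hsnd
    rw [Walk.isPath_iff_eq_nil] at hq'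
    subst hq'
    simp at hlen

/-- Every cycle is an induced cycle: any edge between vertices of a cycle is an edge of it. -/
def Chordless (G : SimpleGraph V) : Prop :=
  ∀ ⦃v : V⦄ (c : G.Walk v v), c.IsCycle → ∀ ⦃x y : V⦄, x ∈ c.support → y ∈ c.support →
    G.Adj x y → s(x, y) ∈ c.edges

lemma exists_low_degree [Fintype V] [DecidableEq V] (hch : Chordless G)
    (hne : G.edgeSet.Nonempty) :
    ∃ u : V, 0 < (G.neighborSet u).ncard ∧ (G.neighborSet u).ncard ≤ 2 := by
  by_contra hB
  push_neg at hB
  obtain ⟨e, he⟩ := hne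
  induction e using Sym2.ind with | _ v₀ w₀ => ?_
  rw [SimpleGraph.mem_edgeSet] at he
  set S : Set ℕ := {n | ∃ (u w : V) (p : G.Walk u w), p.IsPath ∧ p.length = n} with hS
  have hbdd : BddAbove S := by
    refine ⟨Fintype.card V, fun n hn => ?_⟩
    obtain ⟨u, w, p, hp, hl⟩ := hn
    exact hl ▸ hp.length_lt.le
  have h1S : (1 : ℕ) ∈ S := by
    refine ⟨v₀, w₀, Walk.cons he Walk.nil, ?_, rfl⟩
    simp [Walk.cons_isPath_iff, he.ne]
  have hmem := Nat.sSup_mem ⟨1, h1S⟩ hbdd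
  obtain ⟨u, w, p, hp, hlen⟩ := hmem
  have hmax : ∀ k ∈ S, k ≤ sSup S := fun k hk => le_csSup hbdd hk
  have h1n : 1 ≤ sSup S := hmax 1 h1S
  have hnotnil : ¬p.Nil := by
    rw [Walk.nil_iff_length_eq, hlen]
    omega
  have hd : G.Adj u (p.getVert 1) := Walk.adj_snd hnotnil
  have hfin : (G.neighborSet u).Finite := Set.toFinite _
  have hdeg : 0 < (G.neighborSet u).ncard := by
    rw [Set.ncard_pos hfin]
    exact ⟨p.getVert 1, hd⟩
  have h3d : 2 < (G.neighborSet u).ncard := hB u hdeg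
  have hnbr : ∀ z, G.Adj u z → z ∈ p.support := by
    intro z hz
    by_contra hzs
    have hp' : (Walk.cons hz.symm p).IsPath := hp.cons hzs
    have : p.length + 1 ∈ S := ⟨z, w, Walk.cons hz.symm p, hp', rfl⟩
    have := hmax _ this
    omega
  -- three distinct neighbors
  rw [Set.ncard_eq_toFinset_card _ hfin] at h3d
  rw [Finset.two_lt_card_iff] at h3d
  obtain ⟨y₁, y₂, y₃, hy₁, hy₂, hy₃, h12, h13, h23⟩ := h3d
  rw [Set.Finite.mem_toFinset, SimpleGraph.mem_neighborSet] at hy₁ hy₂ hy₃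
  set N3 : Finset V := {y₁, y₂, y₃} with hN3
  have hN3adj : ∀ z ∈ N3, G.Adj u z := by
    intro z hz
    simp only [hN3, Finset.mem_insert, Finset.mem_singleton] at hz
    rcases hz with h | h | h <;> rw [h] <;> assumption
  have hN3sub : ∀ z ∈ N3, z ∈ p.support := fun z hz => hnbr z (hN3adj z hz)
  have hN3ne : N3.Nonempty := ⟨y₁, by simp [hN3]⟩
  obtain ⟨z, hzN, hz, hall⟩ := exists_takeUntil_all p N3 hN3ne hN3sub
  set q := p.takeUntil z hz with hq
  have hqpath : q.IsPath := hp.takeUntil hz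
  have hzadj : G.Adj u z := hN3adj z hzN
  -- q has length at least 2
  have hsub4 : ({u, y₁, y₂, y₃} : Finset V) ⊆ q.support.toFinset := by
    intro t ht
    rw [List.mem_toFinset]
    simp only [Finset.mem_insert, Finset.mem_singleton] at ht
    rcases ht with h | h | h | h <;> rw [h]
    · exact Walk.start_mem_support _
    · exact hall y₁ (by simp [hN3])
    · exact hall y₂ (by simp [hN3])
    · exact hall y₃ (by simp [hN3])
  have hc3 : ({y₁, y₂, y₃} : Finset V).card = 3 :=
    Finset.card_eq_three.mpr ⟨y₁, y₂, y₃, h12, h13, h23, rfl⟩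
  have hcard4 : ({u, y₁, y₂, y₃} : Finset V).card = 4 := by
    have h4 : ({u, y₁, y₂, y₃} : Finset V).card = ({y₁, y₂, y₃} : Finset V).card + 1 :=
      Finset.card_insert_of_notMem (by simp [hy₁.ne, hy₂.ne, hy₃.ne])
    omega
  have hlen2 : 2 ≤ q.length := by
    have h1 := Finset.card_le_card hsub4
    have h2 := q.support.toFinset_card_le
    have h3 : q.support.length = q.length + 1 := Walk.length_support q
    omega
  have hEz : s(u, z) ∉ q.edges := edge_not_mem_of_two_le q hqpath hlen2
  -- the cycle
  set r := q.reverse with hr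
  have hrpath : r.IsPath := hqpath.reverse
  have hrE : s(u, z) ∉ r.edges := by
    rw [hr, Walk.edges_reverse, List.mem_reverse]
    exact hEz
  have hcyc : (Walk.cons hzadj r).IsCycle := by
    rw [Walk.cons_isCycle_iff]
    exact ⟨hrpath, hrE⟩
  -- pick the chord endpoint
  have hNycard : 0 < ((N3.erase z).erase (p.getVert 1)).card := by
    have hc3' : N3.card = 3 := hc3
    have e1 : (N3.erase z).card = N3.card - 1 := Finset.card_erase_of_mem hzN
    have e2 : (N3.erase z).card - 1 ≤ ((N3.erase z).erase (p.getVert 1)).card :=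
      Finset.pred_card_le_card_erase
    omega
  obtain ⟨y, hy⟩ := Finset.card_pos.mp hNycard
  rw [Finset.mem_erase, Finset.mem_erase] at hy
  obtain ⟨hysnd, hyz, hyN⟩ := hy
  have hyadj : G.Adj u y := hN3adj y hyN
  have hysupp : y ∈ (Walk.cons hzadj r).support := by
    rw [Walk.support_cons, List.mem_cons]
    right
    rw [hr, Walk.support_reverse, List.mem_reverse]
    exact hall y hyN
  have := hch (Walk.cons hzadj r) hcyc (Walk.start_mem_support _) hysupp hyadj
  rw [Walk.edges_cons, List.mem_cons] at this
  rcases this with hh | hh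
  · rw [Sym2.congr_right] at hh
    exact hyz hh
  · rw [hr, Walk.edges_reverse, List.mem_reverse] at hh
    have hmem := Walk.edges_takeUntil_subset p hz hh
    have := edge_start_eq_snd p hp hyadj.ne' hmem
    exact hysnd this

lemma chordless_anti {G₂ : SimpleGraph V} (hle : G₂ ≤ G) (hch : Chordless G) : Chordless G₂ := by
  intro v c hc x y hx hy hadj
  have hedges : ∀ e ∈ c.edges, e ∈ G.edgeSet :=
    fun e he => SimpleGraph.edgeSet_mono hle (c.edges_subset_edgeSet he)
  have hc' := hc.transfer hedges
  have hx' : x ∈ (c.transfer G hedges).support := by rwa [Walk.support_transfer]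
  have hy' : y ∈ (c.transfer G hedges).support := by rwa [Walk.support_transfer]
  have := hch (c.transfer G hedges) hc' hx' hy' (hle hadj)
  rwa [Walk.edges_transfer] at this

lemma count_aux [Fintype V] [DecidableEq V] :
    ∀ (m : ℕ) (G : SimpleGraph V), Chordless G → G.edgeSet.ncard ≤ m →
      G.edgeSet.ncard ≤ 2 * G.support.ncard - 2 := by
  intro m
  induction m with
  | zero => intro G _ h; omega
  | succ m ih =>
    intro G hch hle
    by_cases hE : G.edgeSet.Nonempty
    · obtain ⟨u, hdpos, hdle⟩ := exists_low_degree hch hE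
      set G₂ := G.deleteEdges (G.incidenceSet u) with hG₂
      have hG₂le : G₂ ≤ G := SimpleGraph.deleteEdges_le _
      have hch₂ : Chordless G₂ := chordless_anti hG₂le hch
      have hIsub : G.incidenceSet u ⊆ G.edgeSet := G.incidenceSet_subset u
      have hfinE : G.edgeSet.Finite := Set.toFinite _
      have hE₂ : G₂.edgeSet = G.edgeSet \ G.incidenceSet u := G.edgeSet_deleteEdges _
      have hIcard : (G.incidenceSet u).ncard = (G.neighborSet u).ncard := by
        rw [← Nat.card_coe_set_eq, ← Nat.card_coe_set_eq]
        exact Nat.card_congr (G.incidenceSetEquivNeighborSet u)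
      have hm₂ : G₂.edgeSet.ncard = G.edgeSet.ncard - (G.neighborSet u).ncard := by
        rw [hE₂, Set.ncard_diff hIsub (Set.toFinite _), hIcard]
      have hIle : (G.incidenceSet u).ncard ≤ G.edgeSet.ncard :=
        Set.ncard_le_ncard hIsub hfinE
      -- apply ih
      have hm₂le : G₂.edgeSet.ncard ≤ m := by omega
      have hcount₂ := ih G₂ hch₂ hm₂le
      -- support bounds
      obtain ⟨v', hv'⟩ := (Set.ncard_pos (Set.toFinite _)).mp hdpos
      have husupp : u ∈ G.support := ⟨v', hv'⟩
      have hv'supp : v' ∈ G.support := ⟨u, hv'.symm⟩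
      have hsupfin : G.support.Finite := Set.toFinite _
      have hs2 : 2 ≤ G.support.ncard := by
        have hpair : ({u, v'} : Set V) ⊆ G.support := by
          intro t ht
          rcases ht with rfl | rfl
          · exact husupp
          · exact hv'supp
        have := Set.ncard_le_ncard hpair hsupfin
        rwa [Set.ncard_pair (SimpleGraph.Adj.ne hv')] at this
      have hsupp₂ : G₂.support ⊆ G.support \ {u} := by
        intro t ⟨t', hadj⟩
        change G₂.Adj t t' at hadj
        rw [hG₂, SimpleGraph.deleteEdges_adj] at hadj
        obtain ⟨hadjG, hni⟩ := hadj
        have htu : t ≠ u := by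
          rintro rfl
          exact hni ⟨hadjG, Sym2.mem_mk_left _ _⟩
        exact ⟨⟨t', hadjG⟩, htu⟩
      have hsub2 : G₂.support.ncard ≤ G.support.ncard - 1 := by
        have := Set.ncard_le_ncard hsupp₂ (Set.toFinite _)
        rwa [Set.ncard_diff_singleton_of_mem husupp] at this
      omega
    · rw [Set.not_nonempty_iff_eq_empty] at hE
      rw [hE]
      simp

/-- From a cycle through `x` and `y` not using the edge `s(x,y)`, extract a walk from `x` to `y`
avoiding the vertex `a` and the edge `s(x,y)`. -/
lemma exists_detour [DecidableEq V] {v₀ x y a : V} (c : G.Walk v₀ v₀) (hc : c.IsCycle)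
    (hx : x ∈ c.support) (hy : y ∈ c.support) (hxy : x ≠ y) (hax : a ≠ x) (hay : a ≠ y)
    (hne : s(x, y) ∉ c.edges) :
    ∃ W : G.Walk x y, a ∉ W.support ∧ s(x, y) ∉ W.edges := by
  set c' := c.rotate x hx with hc'def
  have hc' : c'.IsCycle := hc.rotate hx
  have hyt : y ∈ c.support.tail := by
    by_cases hyv : y = v₀
    · subst hyv
      cases c with
      | nil => exact absurd rfl hc.ne_nil
      | cons h q => simpa using Walk.end_mem_support q
    · have := hy
      rw [Walk.support_eq_cons c, List.mem_cons] at this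
      exact this.resolve_left hyv
  have hy' : y ∈ c'.support := by
    rw [Walk.support_eq_cons c', List.mem_cons]
    right
    exact ((Walk.support_rotate c x hx).mem_iff).2 hyt
  have he' : s(x, y) ∉ c'.edges := fun h => hne ((Walk.rotate_edges c x hx).mem_iff.1 h)
  set t := c'.takeUntil y hy' with htdef
  set d := c'.dropUntil y hy' with hddef
  have het : s(x, y) ∉ t.edges := fun h => he' (Walk.edges_takeUntil_subset c' hy' h)
  have hed : s(x, y) ∉ d.edges := fun h => he' (Walk.edges_dropUntil_subset c' hy' h)
  have hspec : t.append d = c' := Walk.take_spec c' hy'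
  have hnd : c'.support.tail.Nodup := hc'.support_nodup
  have hsplit : c'.support = t.support ++ d.support.tail := by
    rw [← hspec, Walk.support_append]
  have htail : c'.support.tail = t.support.tail ++ d.support.tail := by
    have h1 : c'.support.tail = (t.support ++ d.support.tail).tail := by rw [← hsplit]
    rw [h1, Walk.support_eq_cons t]
    simp
  have hdisj : t.support.tail.Disjoint d.support.tail := by
    rw [htail] at hnd
    exact List.disjoint_of_nodup_append hnd
  by_cases hat : a ∈ t.support
  · have hatt : a ∈ t.support.tail := by
      have := hat
      rw [Walk.support_eq_cons t, List.mem_cons] at this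
      exact this.resolve_left hax
    have hadt : a ∉ d.support.tail := fun h => hdisj hatt h
    have hads : a ∉ d.support := by
      rw [Walk.support_eq_cons d, List.mem_cons]
      rintro (h | h)
      · exact hay h
      · exact hadt h
    refine ⟨d.reverse, ?_, ?_⟩
    · rw [Walk.support_reverse, List.mem_reverse]
      exact hads
    · rw [Walk.edges_reverse, List.mem_reverse]
      exact hed
  · exact ⟨t, hat, het⟩

/-- The auxiliary graph avoiding a vertex `a` and an edge `e`. -/
def avoidG (G : SimpleGraph V) (a : V) (e : Sym2 V) : SimpleGraph V where
  Adj p q := G.Adj p q ∧ p ≠ a ∧ q ≠ a ∧ s(p, q) ≠ e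
  symm := by
    constructor
    rintro p q ⟨h, hp, hq, he⟩
    exact ⟨h.symm, hq, hp, by rwa [Sym2.eq_swap]⟩
  loopless := ⟨fun p h => G.loopless.irrefl p h.1⟩

lemma reach_avoid [DecidableEq V] {x y a : V}
    (hW : a ≠ x → a ≠ y → ∃ W : G.Walk x y, a ∉ W.support ∧ s(x, y) ∉ W.edges) :
    ∀ {u w : V} (p : G.Walk u w), a ∉ p.support → (avoidG G a s(x, y)).Reachable u w := by
  intro u w p
  induction p with
  | nil => exact fun _ => Reachable.refl _
  | cons h q ih =>
    rename_i u' v' w'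
    intro hs
    rw [Walk.support_cons, List.mem_cons] at hs
    push_neg at hs
    obtain ⟨hau, haq⟩ := hs
    have hav : a ≠ v' := fun hh => haq (hh ▸ Walk.start_mem_support q)
    refine Reachable.trans ?_ (ih haq)
    by_cases hevw : s(u', v') = s(x, y)
    · rw [Sym2.eq_iff] at hevw
      rcases hevw with ⟨rfl, rfl⟩ | ⟨rfl, rfl⟩
      · obtain ⟨W, hWa, hWe⟩ := hW hau hav
        have hcond : ∀ e ∈ W.edges, e ∈ (avoidG G a s(u', v')).edgeSet := by
          intro e he
          induction e using Sym2.ind with | _ p₁ q₁ => ?_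
          rw [SimpleGraph.mem_edgeSet]
          refine ⟨Walk.adj_of_mem_edges W he, ?_, ?_, ?_⟩
          · exact fun hh => (hh ▸ hWa) (Walk.fst_mem_support_of_mem_edges W he)
          · exact fun hh => (hh ▸ hWa) (Walk.snd_mem_support_of_mem_edges W he)
          · exact fun hh => hWe (hh ▸ he)
        exact (W.transfer _ hcond).reachable
      · obtain ⟨W, hWa, hWe⟩ := hW hav hau
        have hcond : ∀ e ∈ W.edges, e ∈ (avoidG G a s(v', u')).edgeSet := by
          intro e he
          induction e using Sym2.ind with | _ p₁ q₁ => ?_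
          rw [SimpleGraph.mem_edgeSet]
          refine ⟨Walk.adj_of_mem_edges W he, ?_, ?_, ?_⟩
          · exact fun hh => (hh ▸ hWa) (Walk.fst_mem_support_of_mem_edges W he)
          · exact fun hh => (hh ▸ hWa) (Walk.snd_mem_support_of_mem_edges W he)
          · exact fun hh => hWe (hh ▸ he)
        have hr := (W.transfer _ hcond).reachable
        rw [show s(v', u') = s(u', v') from Sym2.eq_swap] at hr ⊢
        exact hr.symm
    · exact SimpleGraph.Adj.reachable ⟨h, fun hh => hau hh.symm, fun hh => hav hh.symm, hevw⟩

lemma avoid_walk_to_induce {a : V} {e : Sym2 V} :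
    ∀ {u w : V} (_ : (avoidG G a e).Walk u w) (hu : u ∈ ({a}ᶜ : Set V))
      (hw : w ∈ ({a}ᶜ : Set V)),
      ((G.deleteEdges {e}).induce ({a}ᶜ : Set V)).Reachable ⟨u, hu⟩ ⟨w, hw⟩ := by
  intro u w p
  induction p with
  | nil => intro hu hw; exact Reachable.refl _
  | cons h q ih =>
    rename_i u' v' w'
    intro hu hw
    obtain ⟨hadj, hu'a, hv'a, hee⟩ := h
    have hv : v' ∈ ({a}ᶜ : Set V) := hv'a
    refine Reachable.trans (SimpleGraph.Adj.reachable ?_) (ih hv hw)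
    show ((G.deleteEdges {e}).induce ({a}ᶜ : Set V)).Adj ⟨u', hu⟩ ⟨v', hv⟩
    simp only [SimpleGraph.comap_adj, SimpleGraph.deleteEdges_adj, Set.mem_singleton_iff]
    exact ⟨hadj, hee⟩

lemma delete_chord_induce_conn [Fintype V] [DecidableEq V] {G : SimpleGraph V}
    (h3 : 3 ≤ Fintype.card V) (h2 : TwoVertexConnected G) {v₀ x y : V}
    (c : G.Walk v₀ v₀) (hc : c.IsCycle) (hx : x ∈ c.support) (hy : y ∈ c.support)
    (hadj : G.Adj x y) (hne : s(x, y) ∉ c.edges) (a : V) :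
    ((G.deleteEdges {s(x, y)}).induce ({a}ᶜ : Set V)).Connected := by
  have hnontriv : Nontrivial V := Fintype.one_lt_card_iff_nontrivial.mp (by omega)
  rw [SimpleGraph.connected_iff]
  constructor
  · rintro ⟨u, hu⟩ ⟨w, hw⟩
    obtain ⟨q0⟩ := (h2.2 a).preconnected ⟨u, hu⟩ ⟨w, hw⟩
    set p1 := q0.map (SimpleGraph.Embedding.induce ({a}ᶜ : Set V)).toHom with hp1
    have hap1 : a ∉ p1.support := by
      intro hmem
      rw [hp1, Walk.support_map, List.mem_map] at hmem
      obtain ⟨⟨b, hb⟩, _, hb2⟩ := hmem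
      exact hb (by simp [← hb2])
    have hK := reach_avoid (G := G) (x := x) (y := y) (a := a)
      (fun hax hay => exists_detour c hc hx hy hadj.ne hax hay hne) p1 hap1
    obtain ⟨pk⟩ := hK
    exact avoid_walk_to_induce pk hu hw
  · obtain ⟨b, hb⟩ := exists_ne a
    exact ⟨⟨b, hb⟩⟩

lemma delete_chord_twoconn [Fintype V] [DecidableEq V] {G : SimpleGraph V}
    (h3 : 3 ≤ Fintype.card V) (h2 : TwoVertexConnected G) {v₀ x y : V}
    (c : G.Walk v₀ v₀) (hc : c.IsCycle) (hx : x ∈ c.support) (hy : y ∈ c.support)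
    (hadj : G.Adj x y) (hne : s(x, y) ∉ c.edges) :
    TwoVertexConnected (G.deleteEdges {s(x, y)}) := by
  constructor
  · rw [SimpleGraph.connected_iff]
    constructor
    · intro u w
      have hex : ∃ a : V, a ≠ u ∧ a ≠ w := by
        by_contra hcon
        push_neg at hcon
        have : (Finset.univ : Finset V) ⊆ {u, w} := by
          intro t _
          by_cases htu : t = u
          · simp [htu]
          · simp [hcon t htu]
        have hcard := Finset.card_le_card this
        have : ({u, w} : Finset V).card ≤ 2 := Finset.card_insert_le _ _ |>.trans (by simp)
        simp only [Finset.card_univ] at hcard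
        omega
      obtain ⟨a, hau, haw⟩ := hex
      have hconn := delete_chord_induce_conn h3 h2 c hc hx hy hadj hne a
      have hr := hconn.preconnected ⟨u, hau.symm⟩ ⟨w, haw.symm⟩
      have := hr.map (SimpleGraph.Embedding.induce ({a}ᶜ : Set V)).toHom
      exact this
    · exact Fintype.card_pos_iff.mp (by omega)
  · exact delete_chord_induce_conn h3 h2 c hc hx hy hadj hne


end Aux

/-- Any edge-minimal 2-vertex-connected graph on `n ≥ 3` vertices has at most `2n − 2` edges. -/
theorem stmt11 {V : Type*} [Fintype V] (G : SimpleGraph V)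
    (h3 : 3 ≤ Fintype.card V)
    (h2 : TwoVertexConnected G)
    (hmin : ∀ e ∈ G.edgeSet, ¬ TwoVertexConnected (G.deleteEdges {e})) :
    G.edgeSet.ncard ≤ 2 * Fintype.card V - 2 := by
  classical
  have hch : Chordless G := by
    intro v₀ c hc x y hx hy hadj
    by_contra hne
    exact hmin _ ((SimpleGraph.mem_edgeSet G).mpr hadj)
      (delete_chord_twoconn h3 h2 c hc hx hy hadj hne)
  have hcount := count_aux G.edgeSet.ncard G hch le_rfl
  have hsupp : G.support.ncard ≤ Fintype.card V := by
    have := Set.ncard_le_ncard (Set.subset_univ G.support) (Set.toFinite _)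
    rwa [Set.ncard_univ, Nat.card_eq_fintype_card] at this
  omega
end

section
/- Let H be a finite simple graph on n ≥ 2 vertices, and let x_1, x_2, …, x_n be an enumeration of its vertex set with u = x_1 and v = x_n such that d_H(u, x_{j−1}) ≤ d_H(u, x_j) for all 2 ≤ j ≤ n−1 (distances valued in ℕ ∪ {∞}). Suppose there are indices 1 = i_1 < i_2 < … < i_s and j_1 < j_2 < … < j_s = n with i_k < j_k for all 1 ≤ k ≤ s, i_k < j_{k−1} for all 2 ≤ k ≤ s, and {x_{i_k}, x_{j_k}} ∈ E(H) for all 1 ≤ k ≤ s. Then d_H(u, v) ≤ s. -/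
open SimpleGraph
open scoped ENNReal

/-- Let `H` be a finite simple graph on `n ≥ 2` vertices with an enumeration
`x 0, x 1, …, x (n-1)` of its vertex set (0-based indexing of `x_1, …, x_n`), `u = x 0`,
`v = x (n-1)`, such that `d_H(u, x (j-1)) ≤ d_H(u, x j)` for all `1 ≤ j ≤ n−2`
(i.e. `2 ≤ j ≤ n−1` in 1-based indexing). Suppose there are indices
`i 0 < … < i (s-1)` and `j 0 < … < j (s-1)` with `i 0 = 0`, `j (s-1) = n−1`, `i k < j k`
for all `k`, `i k < j (k−1)` for all `k ≥ 1`, and `{x (i k), x (j k)} ∈ E(H)` for all `k`.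
Then `d_H(u, v) ≤ s` (distances in `ℕ∞`, with `∞` if no path exists). -/
theorem stmt13 {V : Type*} [Fintype V] (H : SimpleGraph V) (n s : ℕ)
    (hn : 2 ≤ n) (x : Fin n → V) (hx : Function.Bijective x)
    (u v : V)
    (hu : u = x ⟨0, by omega⟩) (hv : v = x ⟨n - 1, by omega⟩)
    (hord : ∀ jdx : ℕ, ∀ _h1 : 1 ≤ jdx, ∀ _h2 : jdx ≤ n - 2,
      H.edist u (x ⟨jdx - 1, by omega⟩) ≤ H.edist u (x ⟨jdx, by omega⟩))
    (hs : 0 < s) (i j : Fin s → Fin n)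
    (hi : StrictMono i) (hj : StrictMono j)
    (hi0 : (i ⟨0, hs⟩ : ℕ) = 0)
    (hjlast : (j ⟨s - 1, Nat.sub_lt hs one_pos⟩ : ℕ) = n - 1)
    (hij : ∀ k : Fin s, (i k : ℕ) < (j k : ℕ))
    (hij2 : ∀ k : Fin s, 1 ≤ (k : ℕ) →
      (i k : ℕ) < (j ⟨(k : ℕ) - 1, lt_of_le_of_lt (Nat.sub_le _ _) k.isLt⟩ : ℕ))
    (hedge : ∀ k : Fin s, H.Adj (x (i k)) (x (j k))) :
    H.edist u v ≤ (s : ℕ∞) := by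
  -- monotonicity of distances along the ordering, for indices ≤ n-2
  have mono : ∀ b : ℕ, ∀ hb : b ≤ n - 2, ∀ a : ℕ, ∀ ha : a ≤ b,
      H.edist u (x ⟨a, by omega⟩) ≤ H.edist u (x ⟨b, by omega⟩) := by
    intro b
    induction b with
    | zero =>
      intro _ a ha
      obtain rfl : a = 0 := Nat.le_zero.mp ha
      exact le_refl _
    | succ m ih =>
      intro hb a ha
      rcases Nat.lt_or_ge a (m + 1) with h | h
      · have h1 := ih (by omega) a (by omega)
        have h2 := hord (m + 1) (by omega) hb
        simpa using h1.trans h2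
      · obtain rfl : a = m + 1 := by omega
        exact le_refl _
  -- key induction: d(u, x (j k)) ≤ k + 1
  have key : ∀ k : ℕ, ∀ hk : k < s, H.edist u (x (j ⟨k, hk⟩)) ≤ ((k + 1 : ℕ) : ℕ∞) := by
    intro k
    induction k with
    | zero =>
      intro hk
      have : i ⟨0, hs⟩ = ⟨0, by omega⟩ := Fin.ext hi0
      have hadj : H.Adj u (x (j ⟨0, hs⟩)) := by
        rw [hu, ← this]; exact hedge _
      calc H.edist u (x (j ⟨0, hk⟩)) = 1 := edist_eq_one_iff_adj.mpr hadj
        _ ≤ _ := by norm_num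
    | succ m ih =>
      intro hk
      have hm : m < s := by omega
      -- j ⟨m, hm⟩ ≤ n - 2 since j strict mono and m < s - 1
      have hjm : (j ⟨m, hm⟩ : ℕ) ≤ n - 2 := by
        have hlt : (⟨m, hm⟩ : Fin s) < ⟨s - 1, Nat.sub_lt hs one_pos⟩ := by
          simp [Fin.lt_def]; omega
        have := hj hlt
        rw [Fin.lt_def, hjlast] at this
        have hnn := (j ⟨s - 1, Nat.sub_lt hs one_pos⟩).isLt
        omega
      have hik : (i ⟨m + 1, hk⟩ : ℕ) < (j ⟨m, hm⟩ : ℕ) := by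
        have := hij2 ⟨m + 1, hk⟩ (by simp)
        simpa using this
      -- d(u, x(i (m+1))) ≤ d(u, x(j m))
      have h1 : H.edist u (x (i ⟨m + 1, hk⟩)) ≤ H.edist u (x (j ⟨m, hm⟩)) := by
        have := mono (j ⟨m, hm⟩ : ℕ) hjm (i ⟨m + 1, hk⟩ : ℕ) (by omega)
        simpa using this
      have h2 : H.edist (x (i ⟨m + 1, hk⟩)) (x (j ⟨m + 1, hk⟩)) = 1 :=
        edist_eq_one_iff_adj.mpr (hedge _)
      calc H.edist u (x (j ⟨m + 1, hk⟩))
          ≤ H.edist u (x (i ⟨m + 1, hk⟩)) + H.edist (x (i ⟨m + 1, hk⟩)) (x (j ⟨m + 1, hk⟩)) :=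
            H.edist_triangle
        _ ≤ H.edist u (x (j ⟨m, hm⟩)) + 1 := by rw [h2]; exact add_le_add_left h1 1
        _ ≤ ((m + 1 : ℕ) : ℕ∞) + 1 := add_le_add_left (ih hm) 1
        _ = ((m + 1 + 1 : ℕ) : ℕ∞) := by push_cast; ring
  have := key (s - 1) (Nat.sub_lt hs one_pos)
  have hjv : x (j ⟨s - 1, Nat.sub_lt hs one_pos⟩) = v := by
    rw [hv]; congr 1; exact Fin.ext hjlast
  rw [hjv] at this
  calc H.edist u v ≤ ((s - 1 + 1 : ℕ) : ℕ∞) := this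
    _ = (s : ℕ∞) := by congr 1; omega
end

section
/- Let t ≥ 1 be an integer and let G be a finite simple graph on n ≥ 3 vertices whose girth is at least 2t + 2 (i.e., every cycle in G has length at least 2t + 2). Let uv ∈ E(G) and let H = G − uv be the graph obtained by deleting the edge uv. Let x_1, x_2, …, x_n be an enumeration of the vertex set with x_1 = u and x_n = v such that d_H(u, x_{j−1}) ≤ d_H(u, x_j) for all 2 ≤ j ≤ n−1 (distances valued in ℕ ∪ {∞}), and let P be the path graph with edges {x_i, x_{i+1}} for 1 ≤ i ≤ n−1. If S ⊆ E(H) is a set of edges such that the graph with edge set E(P) ∪ S on the vertex set of G is 2-vertex-connected, then |S| ≥ 2t + 1. -/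
open SimpleGraph
open scoped ENNReal

/-- Let `G` be a graph on `n ≥ 3` vertices in which every cycle has length at least `2t+2`
(girth ≥ 2t+2), let `uv ∈ E(G)` and `H = G − uv`. Enumerate the vertices as
`x 0 = u, x 1, …, x (n-1) = v` so that `d_H(u, x (j-1)) ≤ d_H(u, x j)` for `1 ≤ j ≤ n−2`
(i.e. `2 ≤ j ≤ n−1` in 1-based indexing), and let `Pedges` be the edges of the path
`x 0 — x 1 — ⋯ — x (n-1)`. If `S ⊆ E(H)` is a set of edges such that the graph with edge set
`Pedges ∪ S` is 2-vertex-connected, then `|S| ≥ 2t + 1`. -/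
theorem stmt14 {V : Type*} [Fintype V] (t n : ℕ) (ht : 1 ≤ t) (hn : 3 ≤ n)
    (hcard : Fintype.card V = n)
    (G : SimpleGraph V)
    (hgirth : ∀ (a : V) (c : G.Walk a a), c.IsCycle → 2 * t + 2 ≤ c.length)
    (u v : V) (huv : G.Adj u v)
    (H : SimpleGraph V) (hH : H = G.deleteEdges {s(u, v)})
    (x : Fin n → V) (hx : Function.Bijective x)
    (hx0 : x ⟨0, by omega⟩ = u) (hxlast : x ⟨n - 1, by omega⟩ = v)
    (hord : ∀ jdx : ℕ, ∀ _h1 : 1 ≤ jdx, ∀ _h2 : jdx ≤ n - 2,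
      H.edist u (x ⟨jdx - 1, by omega⟩) ≤ H.edist u (x ⟨jdx, by omega⟩))
    (Pedges : Set (Sym2 V))
    (hP : Pedges = {e : Sym2 V | ∃ idx : ℕ, ∃ h : idx + 1 < n,
      e = s(x ⟨idx, by omega⟩, x ⟨idx + 1, h⟩)})
    (S : Set (Sym2 V)) (hS : S ⊆ H.edgeSet)
    (h2 : TwoVertexConnected (SimpleGraph.fromEdgeSet (Pedges ∪ S))) :
    2 * t + 1 ≤ S.ncard := by
  classical
  have hxinj : Function.Injective x := hx.1
  let ex : Fin n ≃ V := Equiv.ofBijective x hx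
  let ix : V → ℕ := fun w => ((ex.symm w) : Fin n).1
  have hixlt : ∀ w : V, ix w < n := fun w => (ex.symm w).2
  have hxix : ∀ w : V, x ⟨ix w, hixlt w⟩ = w := fun w => ex.apply_symm_apply w
  have hixx : ∀ (i : ℕ) (h : i < n), ix (x ⟨i, h⟩) = i := by
    intro i h
    have h1 : ex.symm (ex ⟨i, h⟩) = ⟨i, h⟩ := ex.symm_apply_apply _
    exact congrArg Fin.val h1
  let d : ℕ → ℕ∞ := fun i => if h : i < n then H.edist u (x ⟨i, h⟩) else ⊤
  have hd_eq : ∀ (i : ℕ) (h : i < n), d i = H.edist u (x ⟨i, h⟩) := fun i h => dif_pos h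
  have hd_ix : ∀ w : V, d (ix w) = H.edist u w := by
    intro w
    rw [hd_eq (ix w) (hixlt w), hxix w]
  have hd0 : d 0 = 0 := by
    rw [hd_eq 0 (by omega)]
    have h1 : x ⟨0, by omega⟩ = u := hx0
    rw [h1]
    simp
  -- girth gives distance lower bound
  have hdist : ((2*t+1 : ℕ) : ℕ∞) ≤ H.edist u v := by
    by_contra hlt
    push_neg at hlt
    have hnt : H.edist u v ≠ ⊤ := ne_top_of_lt hlt
    obtain ⟨W, hW⟩ := exists_walk_of_edist_ne_top hnt
    have hlen : W.length ≤ 2*t := by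
      have h1 : (W.length : ℕ∞) < ((2*t+1 : ℕ) : ℕ∞) := by rw [hW]; exact hlt
      have h2 : W.length < 2*t+1 := by exact_mod_cast h1
      omega
    set P0 := W.reverse.bypass with hP0
    have hP0path : P0.IsPath := W.reverse.bypass_isPath
    have hP0len : P0.length ≤ 2*t := by
      calc P0.length ≤ W.reverse.length := Walk.length_bypass_le _
        _ = W.length := W.length_reverse
        _ ≤ 2*t := hlen
    have hle : H ≤ G := by rw [hH]; exact deleteEdges_le _
    set P1 : G.Walk v u := P0.mapLe hle with hP1
    have hP1path : P1.IsPath := hP0path.mapLe hle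
    have hedge : s(u,v) ∉ P1.edges := by
      intro hmem
      have h1 : s(u,v) ∈ P0.edges := by
        rw [hP1] at hmem
        simpa [Walk.mapLe, Walk.edges_map, List.mem_map, Hom.ofLE_apply,
          Sym2.map_id'] using hmem
      have h3 := P0.edges_subset_edgeSet h1
      rw [hH] at h3
      simp [edgeSet_deleteEdges] at h3
    have hcyc : (Walk.cons huv P1).IsCycle := Path.cons_isCycle ⟨P1, hP1path⟩ huv hedge
    have hg := hgirth u _ hcyc
    have hlc : (Walk.cons huv P1).length = P1.length + 1 := Walk.length_cons _ _
    have hP1len : P1.length = P0.length := by simp [hP1, Walk.mapLe]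
    omega
  -- monotonicity of distance along the ordering
  have hmono : ∀ b, b ≤ n-2 → ∀ a, a ≤ b → d a ≤ d b := by
    intro b
    induction b with
    | zero =>
      intro _ a ha
      obtain rfl : a = 0 := Nat.le_zero.mp ha
      exact le_rfl
    | succ k ih =>
      intro hk a ha
      rcases (by omega : a ≤ k ∨ a = k+1) with h | h
      · have h1 : d a ≤ d k := ih (by omega) a h
        have h2 := hord (k+1) (by omega) hk
        have h3 : d k ≤ d (k+1) := by
          rw [hd_eq k (by omega), hd_eq (k+1) (by omega)]
          exact h2
        exact le_trans h1 h3
      · subst h; exact le_rfl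
  have hdlast : ∀ r : ℕ, r ≤ 2*t → (r : ℕ∞) < d (n-1) := by
    intro r hr
    rw [hd_eq (n-1) (by omega)]
    have hv' : x ⟨n-1, by omega⟩ = v := hxlast
    rw [hv']
    refine lt_of_lt_of_le ?_ hdist
    exact_mod_cast (show r < 2*t+1 by omega)
  let m : ℕ → ℕ := fun r => sInf {i : ℕ | (r : ℕ∞) < d i}
  have hm_mem : ∀ r, r ≤ 2*t → (r : ℕ∞) < d (m r) := by
    intro r hr
    have hne : {i : ℕ | (r : ℕ∞) < d i}.Nonempty := ⟨n-1, hdlast r hr⟩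
    exact Nat.sInf_mem hne
  have hm_le : ∀ r, r ≤ 2*t → m r ≤ n-1 := fun r hr => Nat.sInf_le (hdlast r hr)
  have hm_pos : ∀ r, r ≤ 2*t → 1 ≤ m r := by
    intro r hr
    rcases Nat.eq_zero_or_pos (m r) with h | h
    · exfalso
      have h1 := hm_mem r hr
      rw [h, hd0] at h1
      simpa using h1
    · exact h
  have hm_lt : ∀ r, ∀ i, i < m r → ¬ ((r : ℕ∞) < d i) :=
    fun r i hi => Nat.notMem_of_lt_sInf hi
  -- existence of a crossing S-edge for each cut
  have crossA : ∀ r, r ≤ 2*t → ∃ p q : V, s(p,q) ∈ S ∧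
      ix p < min (m r) (n-2) ∧ min (m r) (n-2) < ix q := by
    intro r hr
    set jr := min (m r) (n-2) with hjrdef
    have hj1 : 1 ≤ jr := le_min (hm_pos r hr) (by omega)
    have hj2 : jr ≤ n-2 := min_le_right _ _
    have hjlt : jr < n := by omega
    set w : V := x ⟨jr, hjlt⟩ with hw
    have hxne : ∀ (i : ℕ) (h : i < n), i ≠ jr → x ⟨i, h⟩ ≠ w := by
      intro i h hne heq
      exact hne (by simpa using congrArg Fin.val (hxinj heq))
    have hu_mem : u ∈ ({w}ᶜ : Set V) := by
      simp only [Set.mem_compl_iff, Set.mem_singleton_iff]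
      intro h
      exact hxne 0 (by omega) (by omega) (hx0.trans h)
    have hv_mem : v ∈ ({w}ᶜ : Set V) := by
      simp only [Set.mem_compl_iff, Set.mem_singleton_iff]
      intro h
      exact hxne (n-1) (by omega) (by omega) (hxlast.trans h)
    obtain ⟨W⟩ := ((h2.2 w).preconnected) ⟨u, hu_mem⟩ ⟨v, hv_mem⟩
    have hixu : ix u = 0 := by rw [← hx0, hixx]
    have hixv : ix v = n-1 := by rw [← hxlast, hixx]
    have hus : (⟨u, hu_mem⟩ : ({w}ᶜ : Set V)) ∈ {z : ({w}ᶜ : Set V) | ix (z : V) < jr} := by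
      simp only [Set.mem_setOf_eq, hixu]
      omega
    have hvs : (⟨v, hv_mem⟩ : ({w}ᶜ : Set V)) ∉ {z : ({w}ᶜ : Set V) | ix (z : V) < jr} := by
      simp only [Set.mem_setOf_eq, hixv]
      omega
    obtain ⟨dt, _, hfst, hsnd⟩ := W.exists_boundary_dart _ hus hvs
    simp only [Set.mem_setOf_eq] at hfst hsnd
    have hadj : (fromEdgeSet (Pedges ∪ S)).Adj (dt.fst : V) (dt.snd : V) := dt.adj
    have hmem := ((fromEdgeSet_adj _).mp hadj).1
    have hqne : ix (dt.snd : V) ≠ jr := by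
      intro h
      have hne : (dt.snd : V) ≠ w := dt.snd.2
      apply hne
      have hfe : x ⟨ix (dt.snd : V), hixlt _⟩ = x ⟨jr, hjlt⟩ := congrArg x (Fin.ext h)
      exact ((hxix (dt.snd : V)).symm.trans hfe).trans hw.symm
    have hq : jr < ix (dt.snd : V) := by omega
    obtain ⟨p, q, hmem', hfst', hq'⟩ :
        ∃ p q : V, s(p,q) ∈ Pedges ∪ S ∧ ix p < jr ∧ jr < ix q :=
      ⟨(dt.fst : V), (dt.snd : V), hmem, hfst, hq⟩
    rcases hmem' with hmem' | hmem'
    · exfalso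
      rw [hP] at hmem'
      obtain ⟨i, hilt, heq⟩ := hmem'
      rw [Sym2.eq_iff] at heq
      rcases heq with ⟨e1, e2⟩ | ⟨e1, e2⟩
      · have i1 : ix p = i := by rw [e1, hixx]
        have i2 : ix q = i+1 := by rw [e2, hixx]
        omega
      · have i1 : ix p = i+1 := by rw [e1, hixx]
        have i2 : ix q = i := by rw [e2, hixx]
        omega
    · exact ⟨p, q, hmem', hfst', hq'⟩
  -- each S-edge crosses at most one cut
  have hadjS : ∀ p q : V, s(p,q) ∈ S → H.edist u q ≤ H.edist u p + 1 := by
    intro p q hpq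
    have hadj : H.Adj p q := H.mem_edgeSet.mp (hS hpq)
    calc H.edist u q ≤ H.edist u p + H.edist p q := SimpleGraph.edist_triangle
      _ = H.edist u p + 1 := by rw [edist_eq_one_iff_adj.mpr hadj]
  have crossB : ∀ r r', r ≤ 2*t → r' ≤ 2*t → ∀ p q : V, s(p,q) ∈ S →
      ix p < min (m r) (n-2) → min (m r) (n-2) < ix q →
      ix p < min (m r') (n-2) → min (m r') (n-2) < ix q → r = r' := by
    intro r r' hr hr' p q hpq h1 h2 h1' h2'
    have hdp : ∀ s, s ≤ 2*t → ix p < min (m s) (n-2) → d (ix p) ≤ (s:ℕ∞) := by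
      intro s hs hlt
      have h3 := hm_lt s (ix p) (lt_of_lt_of_le hlt (min_le_left _ _))
      exact not_lt.mp h3
    have hdp1 := hdp r hr h1
    have hdp1' := hdp r' hr' h1'
    have hb : ix q < n := hixlt q
    rcases (by omega : ix q ≤ n-2 ∨ ix q = n-1) with hb2 | hb2
    · have key : ∀ s, s ≤ 2*t → min (m s) (n-2) < ix q → (s:ℕ∞) < d (ix q) := by
        intro s hs hlt
        have hms : m s ≤ n-2 := by
          by_contra hcon
          have hminr : min (m s) (n-2) = n-2 := min_eq_right (by omega)
          omega
        have hminl : min (m s) (n-2) = m s := min_eq_left hms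
        have hmlt : m s < ix q := by omega
        calc (s:ℕ∞) < d (m s) := hm_mem s hs
          _ ≤ d (ix q) := hmono (ix q) hb2 (m s) (by omega)
      have hk := key r hr h2
      have hk' := key r' hr' h2'
      have hchain : ∀ s1 s2 : ℕ, d (ix p) ≤ (s1:ℕ∞) → (s2:ℕ∞) < d (ix q) → s2 < s1 + 1 := by
        intro s1 s2 ha hbb
        have h3 : d (ix q) ≤ d (ix p) + 1 := by
          rw [hd_ix, hd_ix]
          exact hadjS p q hpq
        have h4 : (s2:ℕ∞) < (s1:ℕ∞) + 1 :=
          lt_of_lt_of_le hbb (le_trans h3 (add_le_add_left ha 1))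
        exact_mod_cast h4
      have e1 := hchain r r' hdp1 hk'
      have e2 := hchain r' r hdp1' hk
      omega
    · have hqv : q = v := by
        rw [← hxix q]
        rw [show (⟨ix q, hixlt q⟩ : Fin n) = ⟨n-1, by omega⟩ from Fin.ext hb2]
        exact hxlast
      have keyv : ∀ s, s ≤ 2*t → d (ix p) ≤ (s:ℕ∞) → s = 2*t := by
        intro s hs hd
        have h3 : ((2*t+1 : ℕ):ℕ∞) ≤ H.edist u p + 1 :=
          le_trans hdist (by rw [← hqv]; exact hadjS p q hpq)
        rw [← hd_ix p] at h3
        have h4 : ((2*t+1:ℕ):ℕ∞) ≤ (s:ℕ∞) + 1 := le_trans h3 (add_le_add_left hd 1)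
        have h5 : 2*t+1 ≤ s + 1 := by exact_mod_cast h4
        omega
      rw [keyv r hr hdp1, keyv r' hr' hdp1']
  -- counting
  have hA : ∀ r : Fin (2*t+1), ∃ e : Sym2 V, e ∈ S ∧ ∃ p q : V, e = s(p,q) ∧
      ix p < min (m r.1) (n-2) ∧ min (m r.1) (n-2) < ix q := by
    intro r
    obtain ⟨p, q, hpq, h1, h2⟩ := crossA r.1 (by have := r.2; omega)
    exact ⟨s(p,q), hpq, p, q, rfl, h1, h2⟩
  choose f hfS hfc using hA
  have hinj : Function.Injective f := by
    intro r r' heq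
    obtain ⟨p, q, hpq, h1, h2⟩ := hfc r
    obtain ⟨p', q', hpq', h1', h2'⟩ := hfc r'
    have hee : s(p,q) = s(p',q') := by rw [← hpq, ← hpq', heq]
    have hfSr : s(p,q) ∈ S := by rw [← hpq]; exact hfS r
    rw [Sym2.eq_iff] at hee
    rcases hee with ⟨e1, e2⟩ | ⟨e1, e2⟩
    · subst e1; subst e2
      exact Fin.ext (crossB r.1 r'.1 (by have := r.2; omega) (by have := r'.2; omega)
        p q hfSr h1 h2 h1' h2')
    · exfalso
      subst e1; subst e2
      omega
  have hrange : Set.range f ⊆ S := by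
    rintro e ⟨r, rfl⟩
    exact hfS r
  have hcardr : (Set.range f).ncard = 2*t+1 := by
    rw [← Nat.card_coe_set_eq, Nat.card_range_of_injective hinj,
      Nat.card_eq_fintype_card, Fintype.card_fin]
  calc 2*t+1 = (Set.range f).ncard := hcardr.symm
    _ ≤ S.ncard := Set.ncard_le_ncard hrange (Set.toFinite S)
end
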